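/- arXiv:2412.08146 — 5 statements merged into one kernel-verified Lean document; each statement's English description precedes it below -/
import Mathlib

section
/- Let C and C′ be ℤ-graded, ℤ-filtered chain complexes over 𝔽₂[U] that are free and finitely generated as 𝔽₂[U]-modules. If there is a filtered chain homotopy equivalence f : C → C′, then for every t ∈ [0,2] the t-modified complexes C^t and (C′)^t are chain homotopy equivalent as gr_t-graded complexes over ℛ. -/
open scoped NNReal
open Polynomial

abbrev F2 := ZMod 2
abbrev PU := Polynomial F2
abbrev LongR := HahnSeries ℝ≥0 F2

noncomputable example : CommRing LongR := inferInstance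

noncomputable def v (α : ℝ≥0) : LongR := HahnSeries.single α 1

/-- A finitely generated, free, `ℤ`-graded `ℤ`-filtered chain complex over `𝔽₂[U]`,
presented by a basis with Maslov grading `M`, Alexander filtration level `A`, and
structure coefficients `c`, so that `∂ x = ∑ y, c x y • U ^ ((M y - M x + 1)/2) • y`. -/
structure BasedComplex where
  ι : Type
  [fin : Fintype ι]
  [dec : DecidableEq ι]
  M : ι → ℤ
  A : ι → ℤ
  c : ι → ι → F2
  hM : ∀ x y, c x y ≠ 0 → ∃ k : ℕ, M y = M x - 1 + 2 * k
  hA : ∀ x y, c x y ≠ 0 → 2 * (A y - A x) ≤ M y - M x + 1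
  d2 : ∀ x z, (∑ y, c x y * c y z) = 0

attribute [instance] BasedComplex.fin BasedComplex.dec

namespace BasedComplex

variable (C : BasedComplex)

/-- The underlying free `𝔽₂[U]`-module. -/
abbrev PMod := C.ι → PU

/-- The differential of the complex over `𝔽₂[U]`. -/
noncomputable def pDiff : C.PMod →ₗ[PU] C.PMod where
  toFun f := fun y => ∑ x, f x * (Polynomial.C (C.c x y) * Polynomial.X ^ ((C.M y - C.M x + 1) / 2).toNat)
  map_add' f g := by
    funext y
    simp [add_mul, Finset.sum_add_distrib]
  map_smul' r f := by
    funext y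
    simp [Finset.mul_sum, mul_assoc]

/-- Homogeneous of Maslov degree `m` (the basis element `U^k x` has degree `M x - 2k`). -/
def PHomog (m : ℤ) (f : C.PMod) : Prop :=
  ∀ x k, (f x).coeff k ≠ 0 → C.M x - 2 * (k : ℤ) = m

/-- Lies in Alexander filtration level `≤ a` (the element `U^k x` has level `A x - k`). -/
def PInFilt (a : ℤ) (f : C.PMod) : Prop :=
  ∀ x k, (f x).coeff k ≠ 0 → C.A x - (k : ℤ) ≤ a

end BasedComplex

/-- A graded, filtered chain map over `𝔽₂[U]`. -/
structure PChainMap (C D : BasedComplex) where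
  toFun : C.PMod →ₗ[PU] D.PMod
  comm : ∀ f, toFun (C.pDiff f) = D.pDiff (toFun f)
  graded : ∀ m f, C.PHomog m f → D.PHomog m (toFun f)
  filtered : ∀ a f, C.PInFilt a f → D.PInFilt a (toFun f)

/-- Filtered chain homotopy between two maps (char 2, so signs are irrelevant). -/
def PHomotopic (C D : BasedComplex) (φ ψ : C.PMod →ₗ[PU] D.PMod) : Prop :=
  ∃ H : C.PMod →ₗ[PU] D.PMod,
    (∀ a f, C.PInFilt a f → D.PInFilt a (H f)) ∧
    (∀ m f, C.PHomog m f → D.PHomog (m + 1) (H f)) ∧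
    ∀ f, D.pDiff (H f) + H (C.pDiff f) = φ f + ψ f

/-- Filtered chain homotopy equivalence of complexes over `𝔽₂[U]`. -/
def FilteredHtpyEquiv (C D : BasedComplex) : Prop :=
  ∃ (φ : PChainMap C D) (ψ : PChainMap D C),
    PHomotopic C C (ψ.toFun.comp φ.toFun) LinearMap.id ∧
    PHomotopic D D (φ.toFun.comp ψ.toFun) LinearMap.id

namespace BasedComplex

variable (C : BasedComplex)

/-- `gr_t` of a basis element: `M x - t * A x`. -/
noncomputable def grt (t : ℝ) (x : C.ι) : ℝ := (C.M x : ℝ) - t * (C.A x : ℝ)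

/-- Exponent of `v` in the `t`-modified differential. -/
noncomputable def texp (t : ℝ) (x y : C.ι) : ℝ≥0 := (C.grt t y - C.grt t x + 1).toNNReal

/-- The `t`-modified differential `∂_t x = ∑ y, c x y • v ^ (gr_t y - gr_t x + 1) • y`,
on the `t`-modified complex `C^t = ⊕_x ℛ⟨x⟩`. -/
noncomputable def tDiff (t : ℝ) : (C.ι → LongR) →ₗ[LongR] (C.ι → LongR) where
  toFun f := fun y => ∑ x, f x * HahnSeries.single (C.texp t x y) (C.c x y)
  map_add' f g := by
    funext y
    simp [add_mul, Finset.sum_add_distrib]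
  map_smul' r f := by
    funext y
    simp [Finset.mul_sum, mul_assoc]

/-- Homogeneous of `gr_t`-degree `d` in `C^t` (the element `v^α x` has degree `gr_t x - α`). -/
def THomog (t d : ℝ) (f : C.ι → LongR) : Prop :=
  ∀ x α, (f x).coeff α ≠ 0 → C.grt t x - (α : ℝ) = d

noncomputable abbrev tCycles (t : ℝ) : Submodule LongR (C.ι → LongR) :=
  LinearMap.ker (C.tDiff t)

/-- Homology of the `t`-modified complex, as an `ℛ`-module. -/
noncomputable abbrev tHomology (t : ℝ) :=
  C.tCycles t ⧸ (LinearMap.range (C.tDiff t)).comap (C.tCycles t).subtype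

noncomputable def tClass (t : ℝ) (f : C.ι → LongR) (hf : f ∈ C.tCycles t) :
    C.tHomology t :=
  Submodule.Quotient.mk ⟨f, hf⟩

/-- The set of `gr_t`-gradings of homogeneous, non-torsion classes in `H(C^t)`. -/
noncomputable def UpsSet (t : ℝ) : Set ℝ :=
  {d | ∃ (f : C.ι → LongR) (hf : f ∈ C.tCycles t),
    C.THomog t d f ∧ ∀ r : LongR, r ≠ 0 → r • C.tClass t f hf ≠ 0}

end BasedComplex

/-- A graded chain map of `t`-modified complexes over `ℛ`. -/
def TChainMapProp (C D : BasedComplex) (t : ℝ)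
    (φ : (C.ι → LongR) →ₗ[LongR] (D.ι → LongR)) : Prop :=
  (∀ f, φ (C.tDiff t f) = D.tDiff t (φ f)) ∧
  ∀ d f, C.THomog t d f → D.THomog t d (φ f)

/-- Graded chain homotopy equivalence of `t`-modified complexes over `ℛ`. -/
def THtpyEquiv (C D : BasedComplex) (t : ℝ) : Prop :=
  ∃ (φ : (C.ι → LongR) →ₗ[LongR] (D.ι → LongR))
    (ψ : (D.ι → LongR) →ₗ[LongR] (C.ι → LongR))
    (H₁ : (C.ι → LongR) →ₗ[LongR] (C.ι → LongR))
    (H₂ : (D.ι → LongR) →ₗ[LongR] (D.ι → LongR)),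
    TChainMapProp C D t φ ∧ TChainMapProp D C t ψ ∧
    (∀ d f, C.THomog t d f → C.THomog t (d + 1) (H₁ f)) ∧
    (∀ f, C.tDiff t (H₁ f) + H₁ (C.tDiff t f) = ψ (φ f) + f) ∧
    (∀ d f, D.THomog t d f → D.THomog t (d + 1) (H₂ f)) ∧
    (∀ f, D.tDiff t (H₂ f) + H₂ (D.tDiff t f) = φ (ψ f) + f)

/-! ### Auxiliary development: transfer of `𝔽₂[U]`-linear maps to the `t`-modified setting -/

namespace TModAux

open BasedComplex

/-- Coefficient of a finite sum of Hahn series. -/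
lemma hahn_sum_coeff {σ : Type*} (s : Finset σ) (g : σ → LongR) (b : ℝ≥0) :
    (∑ i ∈ s, g i).coeff b = ∑ i ∈ s, (g i).coeff b := by
  classical
  induction s using Finset.induction_on with
  | empty => simp
  | insert _ _ h ih => simp [Finset.sum_insert h, HahnSeries.coeff_add, *]

lemma hahn_single_sum {σ : Type*} (s : Finset σ) (a : ℝ≥0) (g : σ → F2) :
    (HahnSeries.single a (∑ i ∈ s, g i) : LongR) = ∑ i ∈ s, HahnSeries.single a (g i) := by
  ext b
  rw [hahn_sum_coeff]
  by_cases hb : b = a <;> simp [HahnSeries.coeff_single, hb]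

/-- Decomposition of a `PU`-linear map in terms of its values on the standard basis. -/
lemma apply_eq (C D : BasedComplex) (F : C.PMod →ₗ[PU] D.PMod) (f : C.PMod) (y : D.ι) :
    F f y = ∑ x, f x * F (Pi.single x 1) y := by
  have hf : f = ∑ x, f x • (Pi.single x 1 : C.PMod) := by
    conv_lhs => rw [pi_eq_sum_univ f]
    refine Finset.sum_congr rfl fun i _ => ?_
    congr 1
    funext j
    simp [Pi.single_apply, eq_comm]
  conv_lhs => rw [hf]
  rw [map_sum]
  simp only [map_smul]
  rw [Finset.sum_apply]
  simp [Pi.smul_apply, smul_eq_mul]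

/-- Matrix entry of a `PU`-linear map, with `U` evaluated at `1`. -/
noncomputable def ent {C D : BasedComplex} (F : C.PMod →ₗ[PU] D.PMod) (x : C.ι) (y : D.ι) :
    F2 :=
  (F (Pi.single x 1) y).eval 1

lemma ent_comp {C D E : BasedComplex} (F : C.PMod →ₗ[PU] D.PMod)
    (G : D.PMod →ₗ[PU] E.PMod) (x : C.ι) (z : E.ι) :
    ent (G.comp F) x z = ∑ y, ent F x y * ent G y z := by
  unfold ent
  rw [LinearMap.comp_apply, apply_eq D E G (F (Pi.single x 1)) z, Polynomial.eval_finset_sum]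
  simp [Polynomial.eval_mul]

lemma ent_add {C D : BasedComplex} (F G : C.PMod →ₗ[PU] D.PMod) (x : C.ι) (y : D.ι) :
    ent (F + G) x y = ent F x y + ent G x y := by
  unfold ent
  simp [LinearMap.add_apply, Pi.add_apply]

/-- The exponent of `v` used when transferring a map of degree shift `r`. -/
noncomputable def eps (C D : BasedComplex) (t r : ℝ) (x : C.ι) (y : D.ι) : ℝ≥0 :=
  (D.grt t y - C.grt t x + r).toNNReal

/-- The transfer of a `PU`-linear map to the `t`-modified complexes. -/
noncomputable def Tmap (C D : BasedComplex) (t r : ℝ) (F : C.PMod →ₗ[PU] D.PMod) :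
    (C.ι → LongR) →ₗ[LongR] (D.ι → LongR) where
  toFun f := fun y => ∑ x, f x * HahnSeries.single (eps C D t r x y) (ent F x y)
  map_add' f g := by
    funext y
    simp [add_mul, Finset.sum_add_distrib]
  map_smul' r f := by
    funext y
    simp [Finset.mul_sum, mul_assoc]

lemma Tmap_apply (C D : BasedComplex) (t r : ℝ) (F : C.PMod →ₗ[PU] D.PMod)
    (f : C.ι → LongR) (y : D.ι) :
    Tmap C D t r F f y = ∑ x, f x * HahnSeries.single (eps C D t r x y) (ent F x y) := rfl

/-- Positivity of exponents on the support of the matrix. -/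
def Pos (C D : BasedComplex) (t r : ℝ) (F : C.PMod →ₗ[PU] D.PMod) : Prop :=
  ∀ x y, ent F x y ≠ 0 → 0 ≤ D.grt t y - C.grt t x + r

lemma exists_coeff {P : PU} (h : P.eval 1 ≠ 0) : ∃ k, P.coeff k ≠ 0 := by
  by_contra hc
  push_neg at hc
  have hP : P = 0 := Polynomial.ext fun n => by simp [hc n]
  simp [hP] at h

lemma key_ineq {t : ℝ} (ht0 : 0 ≤ t) (ht2 : t ≤ 2) (k : ℕ) (d : ℤ) (hd : d ≤ (k : ℤ)) :
    t * (d : ℝ) ≤ 2 * k := by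
  have hdk : (d : ℝ) ≤ (k : ℝ) := by exact_mod_cast hd
  rcases le_or_gt (d : ℝ) 0 with h | h
  · have h1 : t * (d : ℝ) ≤ 0 := mul_nonpos_of_nonneg_of_nonpos ht0 h
    have h2 : (0 : ℝ) ≤ 2 * k := by positivity
    linarith
  · nlinarith

/-- General positivity criterion. -/
lemma pos_general {C D : BasedComplex} {t : ℝ} (ht0 : 0 ≤ t) (ht2 : t ≤ 2)
    (F : C.PMod →ₗ[PU] D.PMod) (r : ℝ)
    (hg : ∀ x y k, (F (Pi.single x 1) y).coeff k ≠ 0 →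
      (D.M y : ℝ) - 2 * k + r = (C.M x : ℝ))
    (hfilt : ∀ x y k, (F (Pi.single x 1) y).coeff k ≠ 0 → D.A y - (k : ℤ) ≤ C.A x) :
    Pos C D t r F := by
  intro x y he
  obtain ⟨k, hk⟩ := exists_coeff he
  have h1 := hg x y k hk
  have h2 := hfilt x y k hk
  have hd : (D.A y - C.A x : ℤ) ≤ (k : ℤ) := by omega
  have h3 := key_ineq ht0 ht2 k (D.A y - C.A x) hd
  have h4 : t * ((D.A y : ℝ) - (C.A x : ℝ)) ≤ 2 * k := by
    have : ((D.A y - C.A x : ℤ) : ℝ) = (D.A y : ℝ) - (C.A x : ℝ) := by push_cast; ring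
    rwa [this] at h3
  unfold BasedComplex.grt
  nlinarith [h4]

lemma single_homog (C : BasedComplex) (x : C.ι) :
    C.PHomog (C.M x) (Pi.single x 1 : C.PMod) := by
  intro x' k h
  by_cases hx : x' = x
  · subst hx
    have : ((1 : PU)).coeff k ≠ 0 := by simpa [Pi.single_apply] using h
    have hk : k = 0 := by
      by_contra hk
      simp [Polynomial.coeff_one, hk] at this
    subst hk
    simp
  · simp [Pi.single_apply, hx] at h

lemma single_filt (C : BasedComplex) (x : C.ι) :
    C.PInFilt (C.A x) (Pi.single x 1 : C.PMod) := by
  intro x' k h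
  by_cases hx : x' = x
  · subst hx
    have : ((1 : PU)).coeff k ≠ 0 := by simpa [Pi.single_apply] using h
    have hk : k = 0 := by
      by_contra hk
      simp [Polynomial.coeff_one, hk] at this
    subst hk
    simp
  · simp [Pi.single_apply, hx] at h

/-- Positivity for a graded filtered chain map. -/
lemma pos_chainMap {C D : BasedComplex} {t : ℝ} (ht0 : 0 ≤ t) (ht2 : t ≤ 2)
    (φ : PChainMap C D) : Pos C D t 0 φ.toFun := by
  refine pos_general ht0 ht2 _ 0 (fun x y k hk => ?_) (fun x y k hk => ?_)
  · have := φ.graded (C.M x) _ (single_homog C x) y k hk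
    have h' : (D.M y : ℝ) - 2 * (k : ℝ) = (C.M x : ℝ) := by exact_mod_cast this
    linarith
  · exact φ.filtered (C.A x) _ (single_filt C x) y k hk

/-- Positivity for a graded filtered homotopy (degree `+1`). -/
lemma pos_homotopy {C D : BasedComplex} {t : ℝ} (ht0 : 0 ≤ t) (ht2 : t ≤ 2)
    (H : C.PMod →ₗ[PU] D.PMod)
    (hfilt : ∀ a f, C.PInFilt a f → D.PInFilt a (H f))
    (hgr : ∀ m f, C.PHomog m f → D.PHomog (m + 1) (H f)) :
    Pos C D t (-1) H := by
  refine pos_general ht0 ht2 _ (-1) (fun x y k hk => ?_) (fun x y k hk => ?_)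
  · have := hgr (C.M x) _ (single_homog C x) y k hk
    have h' : (D.M y : ℝ) - 2 * (k : ℝ) = (C.M x : ℝ) + 1 := by exact_mod_cast this
    linarith
  · exact hfilt (C.A x) _ (single_filt C x) y k hk

lemma ent_pDiff (C : BasedComplex) (x y : C.ι) : ent C.pDiff x y = C.c x y := by
  unfold ent BasedComplex.pDiff
  simp only [LinearMap.coe_mk, AddHom.coe_mk]
  rw [Finset.sum_eq_single x]
  · simp [Pi.single_apply]
  · intro b _ hb
    simp [Pi.single_apply, hb]
  · simp

lemma pDiff_single (C : BasedComplex) (x : C.ι) (y : C.ι) :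
    C.pDiff (Pi.single x 1) y =
      Polynomial.C (C.c x y) * Polynomial.X ^ ((C.M y - C.M x + 1) / 2).toNat := by
  show (∑ x', (Pi.single x 1 : C.PMod) x' *
      (Polynomial.C (C.c x' y) * Polynomial.X ^ ((C.M y - C.M x' + 1) / 2).toNat)) = _
  rw [Finset.sum_eq_single x]
  · simp [Pi.single_apply]
  · intro b _ hb
    simp [Pi.single_apply, hb]
  · simp

/-- Positivity for the differential. -/
lemma pos_pDiff (C : BasedComplex) {t : ℝ} (ht0 : 0 ≤ t) (ht2 : t ≤ 2) :
    Pos C C t 1 C.pDiff := by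
  have hfacts : ∀ x y (k : ℕ), (C.pDiff (Pi.single x 1) y).coeff k ≠ 0 →
      C.M y = C.M x - 1 + 2 * (k : ℤ) ∧ C.A y - C.A x ≤ (k : ℤ) := by
    intro x y k hk
    rw [pDiff_single] at hk
    have hc : C.c x y ≠ 0 := by
      intro h0
      simp [h0] at hk
    obtain ⟨k', hk'⟩ := C.hM x y hc
    have hA := C.hA x y hc
    have hkk : (k : ℤ) = (C.M y - C.M x + 1) / 2 := by
      rw [Polynomial.coeff_C_mul, Polynomial.coeff_X_pow] at hk
      by_cases hkeq : k = ((C.M y - C.M x + 1) / 2).toNat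
      · subst hkeq
        omega
      · simp [hkeq] at hk
    constructor <;> omega
  refine pos_general ht0 ht2 _ 1 (fun x y k hk => ?_) (fun x y k hk => ?_)
  · obtain ⟨h1, _⟩ := hfacts x y k hk
    have h1' : (C.M y : ℝ) = (C.M x : ℝ) - 1 + 2 * (k : ℝ) := by exact_mod_cast h1
    linarith
  · obtain ⟨_, h2⟩ := hfacts x y k hk
    omega

/-- Composition of transferred maps. -/
lemma Tmap_comp {C D E : BasedComplex} (t r r' : ℝ)
    (F : C.PMod →ₗ[PU] D.PMod) (G : D.PMod →ₗ[PU] E.PMod)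
    (hF : Pos C D t r F) (hG : Pos D E t r' G) (f : C.ι → LongR) :
    Tmap D E t r' G (Tmap C D t r F f) = Tmap C E t (r + r') (G.comp F) f := by
  funext z
  simp only [Tmap_apply]
  calc (∑ y, (∑ x, f x * HahnSeries.single (eps C D t r x y) (ent F x y)) *
        HahnSeries.single (eps D E t r' y z) (ent G y z))
      = ∑ y, ∑ x, f x * HahnSeries.single (eps C D t r x y) (ent F x y) *
          HahnSeries.single (eps D E t r' y z) (ent G y z) := by
        refine Finset.sum_congr rfl fun y _ => ?_
        rw [Finset.sum_mul]
    _ = ∑ x, ∑ y, f x * HahnSeries.single (eps C D t r x y) (ent F x y) *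
          HahnSeries.single (eps D E t r' y z) (ent G y z) := Finset.sum_comm
    _ = ∑ x, f x * HahnSeries.single (eps C E t (r + r') x z) (ent (G.comp F) x z) := by
        refine Finset.sum_congr rfl fun x _ => ?_
        rw [ent_comp, hahn_single_sum, Finset.mul_sum]
        refine Finset.sum_congr rfl fun y _ => ?_
        rw [mul_assoc, HahnSeries.single_mul_single]
        by_cases h0 : ent F x y * ent G y z = 0
        · rw [h0]
          simp
        · have hF' : ent F x y ≠ 0 := fun hh => h0 (by simp [hh])
          have hG' : ent G y z ≠ 0 := fun hh => h0 (by simp [hh])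
          congr 2
          unfold eps
          rw [← Real.toNNReal_add (hF x y hF') (hG y z hG')]
          congr 1
          ring_nf

lemma Tmap_id (C : BasedComplex) (t : ℝ) (f : C.ι → LongR) :
    Tmap C C t 0 LinearMap.id f = f := by
  funext y
  rw [Tmap_apply]
  rw [Finset.sum_eq_single y]
  · have he : ent (LinearMap.id : C.PMod →ₗ[PU] C.PMod) y y = 1 := by
      unfold ent
      simp [Pi.single_apply]
    have hε : eps C C t 0 y y = 0 := by
      unfold eps
      simp
    rw [he, hε]
    simp
  · intro b _ hb
    have he : ent (LinearMap.id : C.PMod →ₗ[PU] C.PMod) b y = 0 := by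
      unfold ent
      simp [Pi.single_apply, Ne.symm hb]
    rw [he]
    simp
  · simp

lemma Tmap_pDiff (C : BasedComplex) (t : ℝ) (f : C.ι → LongR) :
    Tmap C C t 1 C.pDiff f = C.tDiff t f := by
  funext y
  rw [Tmap_apply]
  show _ = ∑ x, f x * HahnSeries.single (C.texp t x y) (C.c x y)
  refine Finset.sum_congr rfl fun x _ => ?_
  rw [ent_pDiff]
  rfl

lemma Tmap_add {C D : BasedComplex} (t r : ℝ) (F G : C.PMod →ₗ[PU] D.PMod)
    (f : C.ι → LongR) :
    Tmap C D t r (F + G) f = Tmap C D t r F f + Tmap C D t r G f := by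
  funext y
  simp only [Tmap_apply, Pi.add_apply]
  rw [← Finset.sum_add_distrib]
  refine Finset.sum_congr rfl fun x _ => ?_
  rw [ent_add]
  rw [show (HahnSeries.single (eps C D t r x y) (ent F x y + ent G x y) : LongR) =
      HahnSeries.single (eps C D t r x y) (ent F x y) +
        HahnSeries.single (eps C D t r x y) (ent G x y) by
    ext b
    simp only [HahnSeries.coeff_add, HahnSeries.coeff_single]
    split <;> simp]
  rw [mul_add]

/-- Grading property of the transfer. -/
lemma Tmap_homog {C D : BasedComplex} (t r : ℝ) (F : C.PMod →ₗ[PU] D.PMod)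
    (hF : Pos C D t r F) (d : ℝ) (f : C.ι → LongR) (hf : C.THomog t d f) :
    D.THomog t (d - r) (Tmap C D t r F f) := by
  intro y α hα
  rw [Tmap_apply, hahn_sum_coeff] at hα
  obtain ⟨x, -, hx⟩ := Finset.exists_ne_zero_of_sum_ne_zero hα
  have hmem : α ∈ (f x * HahnSeries.single (eps C D t r x y) (ent F x y)).support := hx
  obtain ⟨α₁, h1, α₂, h2, hsum⟩ :=
    Set.mem_add.mp (HahnSeries.support_mul_subset hmem)
  have hα2 : α₂ = eps C D t r x y := by
    have := HahnSeries.support_single_subset h2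
    rwa [Set.mem_singleton_iff] at this
  have he : ent F x y ≠ 0 := by
    subst hα2
    simpa [HahnSeries.coeff_single_same] using h2
  have hpos := hF x y he
  have hεval : ((eps C D t r x y : ℝ≥0) : ℝ) = D.grt t y - C.grt t x + r :=
    Real.coe_toNNReal _ hpos
  have hd1 : C.grt t x - (α₁ : ℝ) = d := hf x α₁ h1
  have hαval : (α : ℝ) = (α₁ : ℝ) + ((eps C D t r x y : ℝ≥0) : ℝ) := by
    rw [← hsum, hα2]
    push_cast
    ring
  rw [hαval, hεval]
  linarith

lemma Tmap_congr {C D : BasedComplex} (t r : ℝ) (F G : C.PMod →ₗ[PU] D.PMod)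
    (h : ∀ g, F g = G g) (f : C.ι → LongR) :
    Tmap C D t r F f = Tmap C D t r G f := by
  have : F = G := LinearMap.ext h
  rw [this]

end TModAux

open TModAux in
/-- If `C` and `C'` are `ℤ`-graded, `ℤ`-filtered chain complexes over `𝔽₂[U]`, free and
finitely generated as `𝔽₂[U]`-modules, and there is a filtered chain homotopy equivalence
`C → C'`, then for every `t ∈ [0,2]` the `t`-modified complexes `C^t` and `(C')^t` are
chain homotopy equivalent as `gr_t`-graded complexes over `ℛ`. -/
theorem tModified_htpyEquiv_of_filteredHtpyEquiv (C C' : BasedComplex)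
    (h : FilteredHtpyEquiv C C') :
    ∀ t ∈ Set.Icc (0 : ℝ) 2, THtpyEquiv C C' t := by
  classical
  obtain ⟨φ, ψ, ⟨H₁, hH₁filt, hH₁gr, hH₁⟩, ⟨H₂, hH₂filt, hH₂gr, hH₂⟩⟩ := h
  rintro t ⟨ht0, ht2⟩
  have posφ := pos_chainMap ht0 ht2 φ
  have posψ := pos_chainMap ht0 ht2 ψ
  have posH₁ := pos_homotopy ht0 ht2 H₁ hH₁filt hH₁gr
  have posH₂ := pos_homotopy ht0 ht2 H₂ hH₂filt hH₂gr
  have posdC := pos_pDiff C ht0 ht2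
  have posdC' := pos_pDiff C' ht0 ht2
  refine ⟨Tmap C C' t 0 φ.toFun, Tmap C' C t 0 ψ.toFun,
    Tmap C C t (-1) H₁, Tmap C' C' t (-1) H₂,
    ⟨?_, ?_⟩, ⟨?_, ?_⟩, ?_, ?_, ?_, ?_⟩
  · intro f
    rw [← Tmap_pDiff C t f, ← Tmap_pDiff C' t (Tmap C C' t 0 φ.toFun f),
      Tmap_comp t 1 0 C.pDiff φ.toFun posdC posφ f,
      Tmap_comp t 0 1 φ.toFun C'.pDiff posφ posdC' f,
      show (1 : ℝ) + 0 = 0 + 1 by ring]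
    exact Tmap_congr t (0 + 1) _ _ (fun g => by simpa using φ.comm g) f
  · intro d f hf
    simpa using Tmap_homog t 0 φ.toFun posφ d f hf
  · intro f
    rw [← Tmap_pDiff C' t f, ← Tmap_pDiff C t (Tmap C' C t 0 ψ.toFun f),
      Tmap_comp t 1 0 C'.pDiff ψ.toFun posdC' posψ f,
      Tmap_comp t 0 1 ψ.toFun C.pDiff posψ posdC f,
      show (1 : ℝ) + 0 = 0 + 1 by ring]
    exact Tmap_congr t (0 + 1) _ _ (fun g => by simpa using ψ.comm g) f
  · intro d f hf
    simpa using Tmap_homog t 0 ψ.toFun posψ d f hf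
  · intro d f hf
    simpa [sub_neg_eq_add] using Tmap_homog t (-1) H₁ posH₁ d f hf
  · intro f
    rw [← Tmap_pDiff C t (Tmap C C t (-1) H₁ f), ← Tmap_pDiff C t f,
      Tmap_comp t (-1) 1 H₁ C.pDiff posH₁ posdC f,
      Tmap_comp t 1 (-1) C.pDiff H₁ posdC posH₁ f,
      Tmap_comp t 0 0 φ.toFun ψ.toFun posφ posψ f,
      show (-1 : ℝ) + 1 = 0 by ring, show (1 : ℝ) + (-1) = 0 by ring,
      show (0 : ℝ) + 0 = 0 by ring,
      ← Tmap_add t 0 (C.pDiff.comp H₁) (H₁.comp C.pDiff) f]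
    calc Tmap C C t 0 (C.pDiff.comp H₁ + H₁.comp C.pDiff) f
        = Tmap C C t 0 (ψ.toFun.comp φ.toFun + LinearMap.id) f :=
          Tmap_congr t 0 _ _ (fun g => by simpa using hH₁ g) f
      _ = Tmap C C t 0 (ψ.toFun.comp φ.toFun) f + Tmap C C t 0 LinearMap.id f :=
          Tmap_add t 0 _ _ f
      _ = Tmap C C t 0 (ψ.toFun.comp φ.toFun) f + f := by rw [Tmap_id]
  · intro d f hf
    simpa [sub_neg_eq_add] using Tmap_homog t (-1) H₂ posH₂ d f hf
  · intro f
    rw [← Tmap_pDiff C' t (Tmap C' C' t (-1) H₂ f), ← Tmap_pDiff C' t f,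
      Tmap_comp t (-1) 1 H₂ C'.pDiff posH₂ posdC' f,
      Tmap_comp t 1 (-1) C'.pDiff H₂ posdC' posH₂ f,
      Tmap_comp t 0 0 ψ.toFun φ.toFun posψ posφ f,
      show (-1 : ℝ) + 1 = 0 by ring, show (1 : ℝ) + (-1) = 0 by ring,
      show (0 : ℝ) + 0 = 0 by ring,
      ← Tmap_add t 0 (C'.pDiff.comp H₂) (H₂.comp C'.pDiff) f]
    calc Tmap C' C' t 0 (C'.pDiff.comp H₂ + H₂.comp C'.pDiff) f
        = Tmap C' C' t 0 (φ.toFun.comp ψ.toFun + LinearMap.id) f :=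
          Tmap_congr t 0 _ _ (fun g => by simpa using hH₂ g) f
      _ = Tmap C' C' t 0 (φ.toFun.comp ψ.toFun) f + Tmap C' C' t 0 LinearMap.id f :=
          Tmap_add t 0 _ _ f
      _ = Tmap C' C' t 0 (φ.toFun.comp ψ.toFun) f + f := by rw [Tmap_id]
end

section
/- For a finitely generated ℤ-graded, ℤ-filtered free chain complex C over 𝔽₂[U] and any t ∈ [0,2], there is an isomorphism of graded chain complexes over ℛ: (C*)^t ≅ (C^t)*, where C* = Hom_{𝔽₂[U]}(C, 𝔽₂[U]) and (C^t)* = Hom_ℛ(C^t, ℛ). -/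
open scoped NNReal
open Polynomial

noncomputable example : CommRing LongR := inferInstance

namespace BasedComplex

/-- `C ⊗ 𝒲`: a second copy of the generators in bidegree `(M-1, A-1)`, with
block-diagonal differential (the differential on `𝒲` vanishes). -/
def tensorW (C : BasedComplex) : BasedComplex where
  ι := C.ι ⊕ C.ι
  M := Sum.elim C.M fun x => C.M x - 1
  A := Sum.elim C.A fun x => C.A x - 1
  c := fun p q =>
    match p, q with
    | .inl x, .inl y => C.c x y
    | .inr x, .inr y => C.c x y
    | _, _ => 0
  hM := by
    rintro (x | x) (y | y) h <;> simp_all <;>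
      obtain ⟨k, hk⟩ := C.hM _ _ h <;> exact ⟨k, by omega⟩
  hA := by
    rintro (x | x) (y | y) h <;> simp_all <;> have := C.hA _ _ h <;> omega
  d2 := by
    rintro (x | x) (z | z) <;>
      simp [Fintype.sum_sum_type] <;> simpa using C.d2 x z

/-- The dual complex `C* = Hom_{𝔽₂[U]}(C, 𝔽₂[U])`, in the basis dual to the given one. -/
def dualC (C : BasedComplex) : BasedComplex where
  ι := C.ι
  M := fun x => -C.M x
  A := fun x => -C.A x
  c := fun x y => C.c y x
  hM := by
    intro x y h
    obtain ⟨k, hk⟩ := C.hM y x h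
    exact ⟨k, show -C.M y = -C.M x - 1 + 2 * k by omega⟩
  hA := by
    intro x y h
    have := C.hA y x h
    show 2 * (-C.A y - -C.A x) ≤ -C.M y - -C.M x + 1
    omega
  d2 := by
    intro x z
    simpa [mul_comm] using C.d2 z x

/-- Shift of grading (by `a`) and filtration (by `b`). -/
def shiftC (C : BasedComplex) (a b : ℤ) : BasedComplex where
  ι := C.ι
  M := fun x => C.M x + a
  A := fun x => C.A x + b
  c := C.c
  hM := by
    intro x y h
    obtain ⟨k, hk⟩ := C.hM x y h
    exact ⟨k, show C.M y + a = C.M x + a - 1 + 2 * k by omega⟩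
  hA := by
    intro x y h
    have := C.hA x y h
    show 2 * ((C.A y + b) - (C.A x + b)) ≤ (C.M y + a) - (C.M x + a) + 1
    omega
  d2 := C.d2

end BasedComplex

/-- The differential on the dual complex `(C^t)* = Hom_ℛ(C^t, ℛ)`, given by
`(dφ)(x) = φ(∂_t x)`. -/
noncomputable def tDualDiff (C : BasedComplex) (t : ℝ) :
    ((C.ι → LongR) →ₗ[LongR] LongR) →ₗ[LongR] ((C.ι → LongR) →ₗ[LongR] LongR) where
  toFun φ := φ.comp (C.tDiff t)
  map_add' φ ψ := by ext f; simp
  map_smul' r φ := by ext f; simp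

/-- A Hahn series `r ∈ ℛ` is homogeneous of degree `d` when its support is contained in
`{-d}` (recall `gr(v^α) = -α`). -/
def THomogR (d : ℝ) (r : LongR) : Prop := ∀ α : ℝ≥0, r.coeff α ≠ 0 → -(α : ℝ) = d

/-- A morphism `φ ∈ (C^t)*` is homogeneous of degree `m` if it raises `gr_t`-degree by
`m`, i.e. its value on the degree-`gr_t x` basis vector `x` is homogeneous of degree
`m + gr_t x`. -/
def TDualHomog (C : BasedComplex) (t m : ℝ)
    (φ : (C.ι → LongR) →ₗ[LongR] LongR) : Prop :=
  ∀ x : C.ι, THomogR (m + C.grt t x) (φ (Pi.single x 1))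


noncomputable def pairE (C : BasedComplex) :
    (C.ι → LongR) ≃ₗ[LongR] ((C.ι → LongR) →ₗ[LongR] LongR) where
  toFun f :=
    { toFun := fun g => ∑ x, g x * f x
      map_add' := fun g h => by simp [add_mul, Finset.sum_add_distrib]
      map_smul' := fun r g => by simp [Finset.mul_sum, mul_assoc] }
  map_add' f g := by
    ext h
    simp [mul_add, Finset.sum_add_distrib]
  map_smul' r f := by
    ext h
    simp [Finset.mul_sum, mul_left_comm]
  invFun φ := fun x => φ (Pi.single x 1)
  left_inv f := by
    funext x
    simp only [LinearMap.coe_mk, AddHom.coe_mk]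
    rw [Finset.sum_eq_single x]
    · simp
    · intro y _ hy
      simp [Pi.single_apply, hy]
    · simp
  right_inv φ := by
    refine LinearMap.ext fun g => ?_
    simp only [LinearMap.coe_mk, AddHom.coe_mk]
    have hg : g = ∑ x, g x • (Pi.single x 1 : C.ι → LongR) := by
      funext y
      simp [Pi.single_apply, Finset.sum_apply]
    conv_rhs => rw [hg]
    rw [map_sum]
    simp [smul_eq_mul]

lemma pairE_single (C : BasedComplex) (f : C.ι → LongR) (x : C.ι) :
    pairE C f (Pi.single x 1) = f x := by
  show (∑ y, (Pi.single x 1 : C.ι → LongR) y * f y) = f x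
  rw [Finset.sum_eq_single x]
  · simp
  · intro y _ hy
    simp [Pi.single_apply, hy]
  · simp

lemma dualC_grt (C : BasedComplex) (t : ℝ) (x : C.ι) :
    (C.dualC).grt t x = -(C.grt t x) := by
  simp [BasedComplex.grt, BasedComplex.dualC]
  ring

lemma dualC_texp (C : BasedComplex) (t : ℝ) (x y : C.ι) :
    (C.dualC).texp t x y = C.texp t y x := by
  simp [BasedComplex.texp, dualC_grt]
  ring_nf

/-- For a finitely generated `ℤ`-graded, `ℤ`-filtered free chain complex `C` over `𝔽₂[U]`
and any `t ∈ [0,2]`, there is an isomorphism of graded chain complexes over `ℛ`: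
`(C*)^t ≅ (C^t)*`, where `C* = Hom_{𝔽₂[U]}(C, 𝔽₂[U])` and `(C^t)* = Hom_ℛ(C^t, ℛ)`
with differential `(dφ)(x) = φ(∂_t x)`. -/
theorem tModified_dual_iso (C : BasedComplex) (t : ℝ) (ht : t ∈ Set.Icc (0 : ℝ) 2) :
    ∃ e : ((C.dualC).ι → LongR) ≃ₗ[LongR] ((C.ι → LongR) →ₗ[LongR] LongR),
      (∀ f, e ((C.dualC).tDiff t f) = tDualDiff C t (e f)) ∧
      (∀ m f, (C.dualC).THomog t m f ↔ TDualHomog C t m (e f)) := by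
  refine ⟨pairE C, ?_, ?_⟩
  · intro f
    refine LinearMap.ext fun g => ?_
    show (∑ x, g x * (C.dualC).tDiff t f x) = ∑ x, (C.tDiff t g) x * f x
    simp only [BasedComplex.tDiff, LinearMap.coe_mk, AddHom.coe_mk, Finset.mul_sum,
      Finset.sum_mul]
    rw [Finset.sum_comm]
    refine Finset.sum_congr rfl fun x _ => Finset.sum_congr rfl fun y _ => ?_
    show g y * (f x * HahnSeries.single ((C.dualC).texp t x y) ((C.dualC).c x y))
        = g y * HahnSeries.single (C.texp t y x) (C.c y x) * f x
    rw [dualC_texp C t x y]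
    show g y * (f x * HahnSeries.single (C.texp t y x) (C.c y x))
        = g y * HahnSeries.single (C.texp t y x) (C.c y x) * f x
    ring
  · intro m f
    constructor
    · intro hf x α hα
      have f' : C.ι → LongR := f
      have hα' : ((pairE C) (show C.ι → LongR from f) (Pi.single x 1)).coeff α ≠ 0 := hα
      rw [pairE_single] at hα'
      have := hf x α hα'
      rw [dualC_grt] at this
      linarith
    · intro hφ x α hα
      have hα' : ((pairE C) (show C.ι → LongR from f)
          (Pi.single (M := fun _ : C.ι => LongR) x 1)).coeff α ≠ 0 := by
        rw [pairE_single C (show C.ι → LongR from f) x]; exact hα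
      have := hφ x α hα'
      rw [dualC_grt C t x]
      linarith
end

section
/- For a finitely generated ℤ-graded, ℤ-filtered free chain complex C over 𝔽₂[U] and t ∈ [0,2], the t-modification of C ⊗ 𝒲 is isomorphic, as a graded chain complex over ℛ, to C^t ⊗ W_t, where W_t is the two-dimensional graded 𝔽₂-vector space with generators in gr_t-gradings 0 and −1 + t. -/
open scoped NNReal
open Polynomial

noncomputable example : CommRing LongR := inferInstance

/-- For a finitely generated `ℤ`-graded, `ℤ`-filtered free chain complex `C` over
`𝔽₂[U]` and `t ∈ [0,2]`, the `t`-modification of `C ⊗ 𝒲` is isomorphic, as a graded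
chain complex over `ℛ`, to `C^t ⊗ W_t`, where `W_t` is the two-dimensional graded
`𝔽₂`-vector space with generators in `gr_t`-gradings `0` and `−1 + t`.  Here
`C^t ⊗ W_t` is presented as two copies of `C^t`; an element `(f, g)` is homogeneous of
degree `d` iff `f` is homogeneous of degree `d` and `g` of degree `d − (−1 + t)`, and
the differential acts diagonally. -/
theorem tModified_tensorW_iso (C : BasedComplex) (t : ℝ) (ht : t ∈ Set.Icc (0 : ℝ) 2) :
    ∃ e : ((C.tensorW).ι → LongR) ≃ₗ[LongR] ((C.ι → LongR) × (C.ι → LongR)),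
      (∀ f, e ((C.tensorW).tDiff t f) = (C.tDiff t (e f).1, C.tDiff t (e f).2)) ∧
      (∀ d f, (C.tensorW).THomog t d f ↔
        (C.THomog t d (e f).1 ∧ C.THomog t (d - (-1 + t)) (e f).2)) := by
  refine ⟨{ toFun := fun f => (fun x => f (.inl x), fun x => f (.inr x))
            invFun := fun p => Sum.elim p.1 p.2
            map_add' := fun f g => rfl
            map_smul' := fun r f => rfl
            left_inv := fun f => by funext x; cases x <;> rfl
            right_inv := fun p => rfl }, ?_, ?_⟩
  · intro f
    have hgrl : ∀ x y : C.ι, (C.tensorW).texp t (.inl x) (.inl y) = C.texp t x y := by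
      intro x y; rfl
    have hgrr : ∀ x y : C.ι, (C.tensorW).texp t (.inr x) (.inr y) = C.texp t x y := by
      intro x y
      simp only [BasedComplex.texp, BasedComplex.grt, BasedComplex.tensorW]
      norm_num
      ring_nf
    have hcll : ∀ x y : C.ι, (C.tensorW).c (.inl x) (.inl y) = C.c x y := fun _ _ => rfl
    have hcrr : ∀ x y : C.ι, (C.tensorW).c (.inr x) (.inr y) = C.c x y := fun _ _ => rfl
    have hcrl : ∀ x y : C.ι, (C.tensorW).c (.inr x) (.inl y) = 0 := fun _ _ => rfl
    have hclr : ∀ x y : C.ι, (C.tensorW).c (.inl x) (.inr y) = 0 := fun _ _ => rfl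
    have hsum : ∀ g : C.tensorW.ι → LongR,
        ∑ x, g x = (∑ x : C.ι, g (.inl x)) + ∑ x : C.ι, g (.inr x) := fun g =>
      Fintype.sum_sum_type g
    refine Prod.ext ?_ ?_ <;> funext y <;>
      simp only [BasedComplex.tDiff, LinearMap.coe_mk, AddHom.coe_mk, LinearEquiv.coe_mk,
        Equiv.coe_fn_mk] <;>
      refine (hsum _).trans ?_ <;>
      simp only [hcll, hcrr, hcrl, hclr, hgrl, hgrr,
        map_zero, mul_zero, Finset.sum_const_zero, add_zero, zero_add] <;>
      rfl
  · intro d f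
    have hgl : ∀ x : C.ι, (C.tensorW).grt t (.inl x) = C.grt t x := fun x => rfl
    have hgr : ∀ x : C.ι, (C.tensorW).grt t (.inr x) = C.grt t x - 1 + t := by
      intro x
      simp only [BasedComplex.grt, BasedComplex.tensorW, Sum.elim_inr]
      push_cast
      ring
    constructor
    · intro h
      exact ⟨fun x α hc => by have := h (.inl x) α hc; rwa [hgl] at this,
        fun x α hc => by have := h (.inr x) α hc; rw [hgr] at this; linarith⟩
    · rintro ⟨h1, h2⟩ x α hc
      cases x with
      | inl x => rw [hgl]; exact h1 x α hc
      | inr x => rw [hgr]; have := h2 x α hc; linarith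
end

section
/- Let C be a finitely generated ℤ-graded, ℤ-filtered free chain complex over 𝔽₂[U], and for t ∈ [0,1] define Υ_C(t) as the maximum gr_t-grading of a homogeneous non-torsion element of the homology of C^t over ℛ. Then Υ_{C⊗𝒲}(t) = Υ_C(t) for all t ∈ [0,1]. -/
open scoped NNReal
open Polynomial

noncomputable example : CommRing LongR := inferInstance

namespace BasedComplex

variable (C : BasedComplex)

lemma grt_tensorW_inl (t : ℝ) (x : C.ι) :
    C.tensorW.grt t (Sum.inl x) = C.grt t x := rfl

lemma grt_tensorW_inr (t : ℝ) (x : C.ι) :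
    C.tensorW.grt t (Sum.inr x) = C.grt t x - 1 + t := by
  simp only [grt, tensorW, Sum.elim_inr]
  push_cast
  ring

lemma texp_tensorW_inl (t : ℝ) (x y : C.ι) :
    C.tensorW.texp t (Sum.inl x) (Sum.inl y) = C.texp t x y := rfl

lemma texp_tensorW_inr (t : ℝ) (x y : C.ι) :
    C.tensorW.texp t (Sum.inr x) (Sum.inr y) = C.texp t x y := by
  unfold texp
  congr 1
  rw [grt_tensorW_inr, grt_tensorW_inr]
  ring

lemma tDiff_tensorW (t : ℝ) (F : C.tensorW.ι → LongR) :
    C.tensorW.tDiff t F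
      = Sum.elim (C.tDiff t (F ∘ Sum.inl)) (C.tDiff t (F ∘ Sum.inr)) := by
  funext p
  cases p with
  | inl y =>
      show ∑ x : C.ι ⊕ C.ι, _ = _
      rw [Fintype.sum_sum_type]
      have h1 : ∀ x : C.ι, F (Sum.inr x) *
          HahnSeries.single (C.tensorW.texp t (Sum.inr x) (Sum.inl y))
            (C.tensorW.c (Sum.inr x) (Sum.inl y)) = 0 := by
        intro x
        have : C.tensorW.c (Sum.inr x) (Sum.inl y) = 0 := rfl
        rw [this]
        simp
      simp only [h1, Finset.sum_const_zero, add_zero]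
      simp only [texp_tensorW_inl]
      rfl
  | inr y =>
      show ∑ x : C.ι ⊕ C.ι, _ = _
      rw [Fintype.sum_sum_type]
      have h1 : ∀ x : C.ι, F (Sum.inl x) *
          HahnSeries.single (C.tensorW.texp t (Sum.inl x) (Sum.inr y))
            (C.tensorW.c (Sum.inl x) (Sum.inr y)) = 0 := by
        intro x
        have : C.tensorW.c (Sum.inl x) (Sum.inr y) = 0 := rfl
        rw [this]
        simp
      simp only [h1, Finset.sum_const_zero, zero_add]
      simp only [texp_tensorW_inr]
      rfl

lemma smul_tClass_eq_zero_iff (t : ℝ) (r : LongR) (f : C.ι → LongR)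
    (hf : f ∈ C.tCycles t) :
    r • C.tClass t f hf = 0 ↔ ∃ g, C.tDiff t g = r • f := by
  unfold tClass
  rw [← Submodule.Quotient.mk_smul, Submodule.Quotient.mk_eq_zero]
  simp only [Submodule.mem_comap, LinearMap.mem_range]
  constructor
  · rintro ⟨g, hg⟩
    exact ⟨g, hg⟩
  · rintro ⟨g, hg⟩
    exact ⟨g, hg⟩

lemma bddAbove_UpsSet (t : ℝ) : BddAbove (C.UpsSet t) := by
  obtain ⟨b, hb⟩ := (Set.finite_range (C.grt t)).bddAbove
  refine ⟨b, ?_⟩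
  rintro d ⟨f, hf, hhom, hnt⟩
  have hf0 : f ≠ 0 := by
    intro h
    apply hnt 1 one_ne_zero
    rw [smul_tClass_eq_zero_iff]
    exact ⟨0, by simp [h]⟩
  obtain ⟨x, hx⟩ := Function.ne_iff.mp hf0
  have : ∃ α, (f x).coeff α ≠ 0 := by
    by_contra h
    push_neg at h
    apply hx
    ext α
    simpa using h α
  obtain ⟨α, hα⟩ := this
  have hd := hhom x α hα
  calc d = C.grt t x - (α : ℝ) := hd.symm
    _ ≤ C.grt t x := by
        have : (0 : ℝ) ≤ (α : ℝ) := α.coe_nonneg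
        linarith
    _ ≤ b := hb ⟨x, rfl⟩

end BasedComplex

/-- For a finitely generated free `ℤ`-graded, `ℤ`-filtered chain complex `C` over `𝔽₂[U]`
and `t ∈ [0,1]`, tensoring with the two-dimensional complex `𝒲` (generators in bidegrees
`(0,0)` and `(−1,−1)`) does not change the Upsilon invariant:
`Υ_{C ⊗ 𝒲}(t) = Υ_C(t)`, where `Υ` is the maximal `gr_t`-grading of a homogeneous
non-torsion class in the homology of the `t`-modified complex over `ℛ`. -/
theorem upsilon_tensorW (C : BasedComplex) :
    ∀ t ∈ Set.Icc (0 : ℝ) 1, sSup ((C.tensorW).UpsSet t) = sSup (C.UpsSet t) := by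
  intro t ht
  set S := C.UpsSet t with hS
  set T := (C.tensorW).UpsSet t with hT
  -- S ⊆ T
  have hST : S ⊆ T := by
    rintro d ⟨f, hf, hhom, hnt⟩
    refine ⟨Sum.elim f 0, ?_, ?_, ?_⟩
    · erw [LinearMap.mem_ker, C.tDiff_tensorW t (Sum.elim f 0)]
      have hfl : (Sum.elim f (0 : C.ι → LongR)) ∘ Sum.inl = f := rfl
      have hfr : (Sum.elim f (0 : C.ι → LongR)) ∘ Sum.inr = (0 : C.ι → LongR) := rfl
      erw [hfl, hfr, LinearMap.mem_ker.mp hf, map_zero]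
      simp
      rfl
    · rintro (x | x) α hα
      · exact hhom x α hα
      · simp at hα
    · intro r hr hcon
      apply hnt r hr
      rw [C.smul_tClass_eq_zero_iff]
      erw [(C.tensorW).smul_tClass_eq_zero_iff] at hcon
      obtain ⟨G, hG⟩ := hcon
      refine ⟨G ∘ Sum.inl, ?_⟩
      funext y
      have h2 := congrFun ((C.tDiff_tensorW t G).symm.trans hG) (Sum.inl y)
      exact h2
  -- projection
  have hproj : ∀ d ∈ T, d ∈ S ∨ d + (1 - t) ∈ S := by
    rintro d ⟨F, hF, hhom, hnt⟩
    set f₁ : C.ι → LongR := F ∘ Sum.inl with hf₁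
    set f₂ : C.ι → LongR := F ∘ Sum.inr with hf₂
    have hcyc : C.tDiff t f₁ = 0 ∧ C.tDiff t f₂ = 0 := by
      have := (LinearMap.mem_ker.mp hF)
      rw [C.tDiff_tensorW] at this
      constructor
      · funext y; exact congrFun this (Sum.inl y)
      · funext y; exact congrFun this (Sum.inr y)
    have hm1 : f₁ ∈ C.tCycles t := LinearMap.mem_ker.mpr hcyc.1
    have hm2 : f₂ ∈ C.tCycles t := LinearMap.mem_ker.mpr hcyc.2
    have hhom1 : C.THomog t d f₁ := by
      intro x α hα
      exact hhom (Sum.inl x) α hα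
    have hhom2 : C.THomog t (d + (1 - t)) f₂ := by
      intro x α hα
      have := hhom (Sum.inr x) α hα
      rw [C.grt_tensorW_inr] at this
      linarith
    by_contra hcon
    push_neg at hcon
    obtain ⟨h1, h2⟩ := hcon
    have ht1 : ∃ r : LongR, r ≠ 0 ∧ r • C.tClass t f₁ hm1 = 0 := by
      by_contra h
      push_neg at h
      exact h1 ⟨f₁, hm1, hhom1, fun r hr => h r hr⟩
    have ht2 : ∃ r : LongR, r ≠ 0 ∧ r • C.tClass t f₂ hm2 = 0 := by
      by_contra h
      push_neg at h
      exact h2 ⟨f₂, hm2, hhom2, fun r hr => h r hr⟩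
    obtain ⟨r₁, hr₁, hz₁⟩ := ht1
    obtain ⟨r₂, hr₂, hz₂⟩ := ht2
    rw [C.smul_tClass_eq_zero_iff] at hz₁ hz₂
    obtain ⟨g₁, hg₁⟩ := hz₁
    obtain ⟨g₂, hg₂⟩ := hz₂
    apply hnt (r₁ * r₂) (mul_ne_zero hr₁ hr₂)
    rw [(C.tensorW).smul_tClass_eq_zero_iff]
    refine ⟨Sum.elim (r₂ • g₁) (r₁ • g₂), ?_⟩
    rw [C.tDiff_tensorW t (Sum.elim (r₂ • g₁) (r₁ • g₂))]
    have hl : (Sum.elim (r₂ • g₁) (r₁ • g₂)) ∘ Sum.inl = r₂ • g₁ := rfl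
    have hr : (Sum.elim (r₂ • g₁) (r₁ • g₂)) ∘ Sum.inr = r₁ • g₂ := rfl
    erw [hl, hr, map_smul, map_smul, hg₁, hg₂]
    funext p
    cases p with
    | inl y =>
        show (r₂ • r₁ • f₁) y = ((r₁ * r₂) • F) (Sum.inl y)
        simp only [Pi.smul_apply, smul_eq_mul, hf₁, Function.comp_apply]
        show r₂ * (r₁ * F (Sum.inl y)) = (r₁ * r₂) * F (Sum.inl y)
        ring
    | inr y =>
        show (r₁ • r₂ • f₂) y = ((r₁ * r₂) • F) (Sum.inr y)
        simp only [Pi.smul_apply, smul_eq_mul, hf₂, Function.comp_apply]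
        show r₁ * (r₂ * F (Sum.inr y)) = (r₁ * r₂) * F (Sum.inr y)
        ring
  rcases Set.eq_empty_or_nonempty S with hSe | hSne
  · have hTe : T = ∅ := by
      rw [Set.eq_empty_iff_forall_notMem]
      intro d hd
      rcases hproj d hd with h | h
      · rw [hSe] at h; exact h
      · rw [hSe] at h; exact h
    rw [hSe, hTe]
  · have hTne : T.Nonempty := hSne.mono hST
    have hbS : BddAbove S := C.bddAbove_UpsSet t
    have hbT : BddAbove T := (C.tensorW).bddAbove_UpsSet t
    apply le_antisymm
    · apply csSup_le hTne
      intro d hd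
      rcases hproj d hd with h | h
      · exact le_csSup hbS h
      · have := le_csSup hbS h
        have h1t : (0 : ℝ) ≤ 1 - t := by linarith [ht.2]
        linarith
    · exact csSup_le_csSup hbT hSne hST
end

section
/- If two ℤ-graded, ℤ-filtered chain complexes over 𝔽₂[U] are filtered quasi-isomorphic, then they are filtered chain homotopy equivalent; in particular a filtered quasi-isomorphism between such complexes is itself a filtered chain homotopy equivalence. -/
open scoped NNReal
open Polynomial

noncomputable example : CommRing LongR := inferInstance

namespace BasedComplex

/-- The differential of the associated graded object `gr(C) = ⊕ ℱ_s C_d / ℱ_{s−1} C_d`: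
only the components of the differential preserving the Alexander filtration level exactly
survive. -/
noncomputable def grDiff (C : BasedComplex) : C.PMod →ₗ[PU] C.PMod where
  toFun f := fun y => ∑ x, f x *
    (if 2 * (C.A y - C.A x) = C.M y - C.M x + 1 then
        Polynomial.C (C.c x y) * Polynomial.X ^ ((C.M y - C.M x + 1) / 2).toNat
      else 0)
  map_add' f g := by
    funext y
    simp only [Pi.add_apply, add_mul]
    exact Finset.sum_add_distrib
  map_smul' r f := by
    funext y
    try dsimp only
    simp only [Pi.smul_apply, smul_eq_mul]
    rw [Finset.mul_sum]
    exact Finset.sum_congr rfl fun x _ => mul_assoc _ _ _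

end BasedComplex

/-- The associated graded map `gr(φ)` of a filtered map `φ`: only the components
preserving the Alexander filtration level exactly survive. -/
noncomputable def grTrunc (C D : BasedComplex) (φ : C.PMod →ₗ[PU] D.PMod) :
    C.PMod →ₗ[PU] D.PMod where
  toFun f := fun y => ∑ x, f x *
    (∑ k ∈ (φ (Pi.single x 1) y).support,
      if D.A y - (k : ℤ) = C.A x then
        Polynomial.monomial k ((φ (Pi.single x 1) y).coeff k)
      else 0)
  map_add' f g := by
    funext y
    simp only [Pi.add_apply, add_mul]
    exact Finset.sum_add_distrib
  map_smul' r f := by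
    funext y
    try dsimp only
    simp only [Pi.smul_apply, smul_eq_mul]
    rw [Finset.mul_sum]
    exact Finset.sum_congr rfl fun x _ => mul_assoc _ _ _

/-- `φ` is a filtered quasi-isomorphism: the induced map on the homology of the
associated graded objects is an isomorphism (stated without quotients, in char 2:
surjectivity and injectivity on homology classes). -/
def GrQuasiIso (C D : BasedComplex) (φ : C.PMod →ₗ[PU] D.PMod) : Prop :=
  (∀ g ∈ LinearMap.ker D.grDiff, ∃ f ∈ LinearMap.ker C.grDiff,
      g + grTrunc C D φ f ∈ LinearMap.range D.grDiff) ∧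
  (∀ f ∈ LinearMap.ker C.grDiff, grTrunc C D φ f ∈ LinearMap.range D.grDiff →
      f ∈ LinearMap.range C.grDiff)
namespace Aux
open BasedComplex Polynomial

variable {C D E : BasedComplex}

/-- exponent of `U` in the matrix entry of a degree-`deg` graded map. -/
def expo (C D : BasedComplex) (deg : ℤ) (x : C.ι) (y : D.ι) : ℕ :=
  ((D.M y - C.M x - deg) / 2).toNat

def Valid (C D : BasedComplex) (deg : ℤ) (m : C.ι → D.ι → F2) : Prop :=
  ∀ x y, m x y ≠ 0 → ∃ k : ℕ, D.M y = C.M x + deg + 2 * k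

def Filt (C D : BasedComplex) (deg : ℤ) (m : C.ι → D.ι → F2) : Prop :=
  ∀ x y, m x y ≠ 0 → 2 * (D.A y - C.A x) ≤ D.M y - C.M x - deg

lemma expo_spec {deg : ℤ} {m : C.ι → D.ι → F2} (hv : Valid C D deg m)
    {x : C.ι} {y : D.ι} (h : m x y ≠ 0) :
    D.M y - C.M x - deg = 2 * (expo C D deg x y : ℤ) := by
  obtain ⟨k, hk⟩ := hv x y h
  have : expo C D deg x y = k := by
    unfold expo
    omega
  omega

noncomputable def ofMat (C D : BasedComplex) (deg : ℤ) (m : C.ι → D.ι → F2) :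
    C.PMod →ₗ[PU] D.PMod where
  toFun f := fun y => ∑ x, f x * (Polynomial.C (m x y) * Polynomial.X ^ expo C D deg x y)
  map_add' f g := by
    funext y
    simp [add_mul, Finset.sum_add_distrib]
  map_smul' r f := by
    funext y
    simp [Finset.mul_sum, mul_assoc]

lemma ofMat_apply (deg : ℤ) (m : C.ι → D.ι → F2) (f : C.PMod) (y : D.ι) :
    ofMat C D deg m f y = ∑ x, f x * (Polynomial.C (m x y) * Polynomial.X ^ expo C D deg x y) :=
  rfl

/-- matrix multiplication -/
def mmul {C D E : BasedComplex} (a : C.ι → D.ι → F2) (b : D.ι → E.ι → F2) :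
    C.ι → E.ι → F2 :=
  fun x z => ∑ y, a x y * b y z

lemma mmul_assoc {B C D E : BasedComplex} (a : B.ι → C.ι → F2) (b : C.ι → D.ι → F2)
    (c : D.ι → E.ι → F2) : mmul (mmul a b) c = mmul a (mmul b c) := by
  funext x z
  unfold mmul
  simp only [Finset.sum_mul, Finset.mul_sum, mul_assoc]
  exact Finset.sum_comm

def idm (C : BasedComplex) : C.ι → C.ι → F2 := fun x y => if x = y then 1 else 0

lemma Valid.mmul {d₁ d₂ : ℤ} {a : C.ι → D.ι → F2} {b : D.ι → E.ι → F2}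
    (ha : Valid C D d₁ a) (hb : Valid D E d₂ b) : Valid C E (d₁ + d₂) (mmul a b) := by
  intro x z h
  obtain ⟨y, -, hy⟩ := Finset.exists_ne_zero_of_sum_ne_zero h
  have h1 : a x y ≠ 0 := fun h0 => hy (by simp [h0])
  have h2 : b y z ≠ 0 := fun h0 => hy (by simp [h0])
  obtain ⟨k1, hk1⟩ := ha x y h1
  obtain ⟨k2, hk2⟩ := hb y z h2
  exact ⟨k1 + k2, by push_cast; omega⟩

lemma Filt.mmul {d₁ d₂ : ℤ} {a : C.ι → D.ι → F2} {b : D.ι → E.ι → F2}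
    (ha : Filt C D d₁ a) (hb : Filt D E d₂ b) : Filt C E (d₁ + d₂) (mmul a b) := by
  intro x z h
  obtain ⟨y, -, hy⟩ := Finset.exists_ne_zero_of_sum_ne_zero h
  have h1 : a x y ≠ 0 := fun h0 => hy (by simp [h0])
  have h2 : b y z ≠ 0 := fun h0 => hy (by simp [h0])
  have := ha x y h1
  have := hb y z h2
  omega

lemma Valid.add {d : ℤ} {a b : C.ι → D.ι → F2} (ha : Valid C D d a) (hb : Valid C D d b) :
    Valid C D d (fun x y => a x y + b x y) := by
  intro x y h
  by_cases h1 : a x y = 0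
  · exact hb x y (fun h0 => h (by simp [h0, h1]))
  · exact ha x y h1

lemma Filt.add {d : ℤ} {a b : C.ι → D.ι → F2} (ha : Filt C D d a) (hb : Filt C D d b) :
    Filt C D d (fun x y => a x y + b x y) := by
  intro x y h
  by_cases h1 : a x y = 0
  · exact hb x y (fun h0 => h (by simp [h0, h1]))
  · exact ha x y h1

lemma idm_valid : Valid C C 0 (idm C) := by
  intro x y h
  refine ⟨0, ?_⟩
  unfold idm at h
  by_cases hxy : x = y
  · subst hxy; omega
  · simp [hxy] at h

lemma idm_filt : Filt C C 0 (idm C) := by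
  intro x y h
  unfold idm at h
  by_cases hxy : x = y
  · subst hxy; omega
  · simp [hxy] at h

lemma ofMat_add (deg : ℤ) (a b : C.ι → D.ι → F2) (f : C.PMod) :
    ofMat C D deg (fun x y => a x y + b x y) f = ofMat C D deg a f + ofMat C D deg b f := by
  funext y
  simp only [ofMat_apply, Pi.add_apply]
  rw [← Finset.sum_add_distrib]
  refine Finset.sum_congr rfl fun x _ => ?_
  rw [← mul_add, ← add_mul, ← Polynomial.C_add]

lemma ofMat_idm (f : C.PMod) : ofMat C C 0 (idm C) f = f := by
  funext y
  rw [ofMat_apply]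
  rw [Finset.sum_eq_single y]
  · simp [idm, expo]
  · intro x _ hxy
    simp [idm, hxy]
  · simp

lemma ofMat_comp {d₁ d₂ : ℤ} {a : C.ι → D.ι → F2} {b : D.ι → E.ι → F2}
    (ha : Valid C D d₁ a) (hb : Valid D E d₂ b) (f : C.PMod) :
    ofMat D E d₂ b (ofMat C D d₁ a f) = ofMat C E (d₁ + d₂) (mmul a b) f := by
  funext z
  simp only [ofMat_apply, Finset.sum_mul]
  rw [Finset.sum_comm]
  refine Finset.sum_congr rfl fun x _ => ?_
  rw [mmul]
  have : ∀ y : D.ι,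
      f x * (Polynomial.C (a x y) * Polynomial.X ^ expo C D d₁ x y) *
        (Polynomial.C (b y z) * Polynomial.X ^ expo D E d₂ y z)
      = f x * (Polynomial.C (a x y * b y z) * Polynomial.X ^ expo C E (d₁ + d₂) x z) := by
    intro y
    by_cases h1 : a x y = 0
    · simp [h1]
    by_cases h2 : b y z = 0
    · simp [h2]
    have e1 := expo_spec ha h1
    have e2 := expo_spec hb h2
    have e3 : expo C E (d₁ + d₂) x z = expo C D d₁ x y + expo D E d₂ y z := by
      unfold expo at *
      omega
    rw [e3, Polynomial.C_mul]
    ring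
  rw [Finset.sum_congr rfl fun y _ => this y]
  rw [map_sum]
  rw [Finset.sum_mul]
  rw [Finset.mul_sum]

end Aux
namespace Aux
open BasedComplex Polynomial

variable {C D E : BasedComplex}

lemma coeff_term (p : PU) (a : F2) (e K : ℕ) :
    (p * (Polynomial.C a * Polynomial.X ^ e)).coeff K =
      if e ≤ K then p.coeff (K - e) * a else 0 := by
  rw [← mul_assoc, Polynomial.coeff_mul_X_pow']
  split_ifs with h
  · rw [Polynomial.coeff_mul_C]
  · rfl

lemma single_homog (x : C.ι) : C.PHomog (C.M x) (Pi.single x 1) := by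
  intro x' k h
  rw [Pi.single_apply] at h
  split_ifs at h with hx
  · rw [Polynomial.coeff_one] at h
    split_ifs at h with h0
    · subst hx
      omega
    · exact absurd rfl h
  · simp at h

lemma single_filt (x : C.ι) : C.PInFilt (C.A x) (Pi.single x 1) := by
  intro x' k h
  rw [Pi.single_apply] at h
  split_ifs at h with hx
  · rw [Polynomial.coeff_one] at h
    split_ifs at h with h0
    · subst hx
      omega
    · exact absurd rfl h
  · simp at h

lemma ofMat_graded {deg : ℤ} {m : C.ι → D.ι → F2} (hv : Valid C D deg m) :
    ∀ g f, C.PHomog g f → D.PHomog (g + deg) (ofMat C D deg m f) := by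
  intro g f hf y K h
  rw [ofMat_apply, Polynomial.finset_sum_coeff] at h
  obtain ⟨x, -, hx⟩ := Finset.exists_ne_zero_of_sum_ne_zero h
  rw [coeff_term] at hx
  split_ifs at hx with hle
  · have h1 : (f x).coeff (K - expo C D deg x y) ≠ 0 := fun h0 => hx (by simp [h0])
    have h2 : m x y ≠ 0 := fun h0 => hx (by simp [h0])
    have h3 := hf x _ h1
    have h4 := expo_spec hv h2
    have h5 : ((K - expo C D deg x y : ℕ) : ℤ) = (K : ℤ) - expo C D deg x y := by omega
    omega
  · exact absurd rfl hx

lemma ofMat_filtered {deg : ℤ} {m : C.ι → D.ι → F2} (hv : Valid C D deg m)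
    (hft : Filt C D deg m) :
    ∀ a f, C.PInFilt a f → D.PInFilt a (ofMat C D deg m f) := by
  intro a f hf y K h
  rw [ofMat_apply, Polynomial.finset_sum_coeff] at h
  obtain ⟨x, -, hx⟩ := Finset.exists_ne_zero_of_sum_ne_zero h
  rw [coeff_term] at hx
  split_ifs at hx with hle
  · have h1 : (f x).coeff (K - expo C D deg x y) ≠ 0 := fun h0 => hx (by simp [h0])
    have h2 : m x y ≠ 0 := fun h0 => hx (by simp [h0])
    have h3 := hf x _ h1
    have h4 := expo_spec hv h2
    have h6 := hft x y h2
    have h5 : ((K - expo C D deg x y : ℕ) : ℤ) = (K : ℤ) - expo C D deg x y := by omega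
    omega
  · exact absurd rfl hx

lemma ofMat_single {deg : ℤ} (m : C.ι → D.ι → F2) (x : C.ι) (y : D.ι) :
    ofMat C D deg m (Pi.single x 1) y =
      Polynomial.C (m x y) * Polynomial.X ^ expo C D deg x y := by
  rw [ofMat_apply, Finset.sum_eq_single x]
  · rw [Pi.single_eq_same, one_mul]
  · intro x' _ hne
    rw [Pi.single_eq_of_ne hne, zero_mul]
  · simp

lemma ofMat_ext {deg : ℤ} {a b : C.ι → D.ι → F2}
    (h : ∀ f, ofMat C D deg a f = ofMat C D deg b f) : a = b := by
  funext x y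
  have := congrFun (h (Pi.single x 1)) y
  rw [ofMat_single, ofMat_single] at this
  have h2 := congrArg (fun p => Polynomial.coeff p (expo C D deg x y)) this
  simpa [Polynomial.coeff_C_mul, Polynomial.coeff_X_pow] using h2

/-- The matrix of a graded linear map. -/
noncomputable def matOf (deg : ℤ) (L : C.PMod →ₗ[PU] D.PMod) : C.ι → D.ι → F2 :=
  fun x y => (L (Pi.single x 1) y).coeff (expo C D deg x y)

lemma poly_single_coeff {p : PU} {k0 : ℕ} (h : ∀ k, p.coeff k ≠ 0 → k = k0) :
    p = Polynomial.C (p.coeff k0) * Polynomial.X ^ k0 := by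
  ext n
  rcases eq_or_ne n k0 with rfl | hn
  · simp [Polynomial.coeff_C_mul, Polynomial.coeff_X_pow]
  · have : p.coeff n = 0 := by
      by_contra h0
      exact hn (h n h0)
    simp [this, Polynomial.coeff_C_mul, Polynomial.coeff_X_pow, hn]

lemma graded_single_coeff {deg : ℤ} {L : C.PMod →ₗ[PU] D.PMod}
    (hg : ∀ g f, C.PHomog g f → D.PHomog (g + deg) (L f)) (x : C.ι) (y : D.ι) :
    ∀ k, (L (Pi.single x 1) y).coeff k ≠ 0 → k = expo C D deg x y ∧
      2 * (k : ℤ) = D.M y - C.M x - deg := by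
  intro k hk
  have h1 := hg (C.M x) _ (single_homog x) y k hk
  constructor
  · unfold expo
    omega
  · omega

lemma matOf_valid {deg : ℤ} {L : C.PMod →ₗ[PU] D.PMod}
    (hg : ∀ g f, C.PHomog g f → D.PHomog (g + deg) (L f)) :
    Valid C D deg (matOf deg L) := by
  intro x y h
  have := (graded_single_coeff hg x y _ h).2
  exact ⟨expo C D deg x y, by omega⟩

lemma matOf_repr {deg : ℤ} {L : C.PMod →ₗ[PU] D.PMod}
    (hg : ∀ g f, C.PHomog g f → D.PHomog (g + deg) (L f)) (f : C.PMod) :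
    L f = ofMat C D deg (matOf deg L) f := by
  have hrep : f = ∑ x, (f x) • (Pi.single x (1 : PU) : C.PMod) := by
    funext j
    rw [Finset.sum_apply, Finset.sum_eq_single j]
    · simp
    · intro b _ hb
      have : (Pi.single b (1:PU) : C.PMod) j = 0 := Pi.single_eq_of_ne (Ne.symm hb) 1
      simp [this]
    · simp
  conv_lhs => rw [hrep]
  rw [map_sum]
  funext y
  rw [Finset.sum_apply, ofMat_apply]
  refine Finset.sum_congr rfl fun x _ => ?_
  rw [map_smul]
  have : L (Pi.single x 1) y = Polynomial.C (matOf deg L x y) *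
      Polynomial.X ^ expo C D deg x y := by
    rw [matOf]
    exact poly_single_coeff (fun k hk => (graded_single_coeff hg x y k hk).1)
  simp [this, smul_eq_mul]

lemma matOf_filt {deg : ℤ} {L : C.PMod →ₗ[PU] D.PMod}
    (hg : ∀ g f, C.PHomog g f → D.PHomog (g + deg) (L f))
    (hft : ∀ a f, C.PInFilt a f → D.PInFilt a (L f)) :
    Filt C D deg (matOf deg L) := by
  intro x y h
  have h1 := hft (C.A x) _ (single_filt x) y _ h
  have h2 := (graded_single_coeff hg x y _ h).2
  omega

/-- truncation to the filtration-degree-0 part. -/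
def grt (C D : BasedComplex) (deg : ℤ) (m : C.ι → D.ι → F2) : C.ι → D.ι → F2 :=
  fun x y => if 2 * (D.A y - C.A x) = D.M y - C.M x - deg then m x y else 0

lemma grt_valid {deg : ℤ} {m : C.ι → D.ι → F2} (hv : Valid C D deg m) :
    Valid C D deg (grt C D deg m) := by
  intro x y h
  rw [grt] at h
  split_ifs at h
  · exact hv x y h
  · exact absurd rfl h

lemma grt_filt (deg : ℤ) (m : C.ι → D.ι → F2) : Filt C D deg (grt C D deg m) := by
  intro x y h
  rw [grt] at h
  split_ifs at h with hc
  · omega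
  · exact absurd rfl h

lemma grt_idm : grt C C 0 (idm C) = idm C := by
  funext x y
  rw [grt, idm]
  rcases eq_or_ne x y with rfl | hne
  · simp
  · simp [hne]

lemma grt_mmul {d₁ d₂ : ℤ} {a : C.ι → D.ι → F2} {b : D.ι → E.ι → F2}
    (hva : Valid C D d₁ a) (hfa : Filt C D d₁ a)
    (hvb : Valid D E d₂ b) (hfb : Filt D E d₂ b) :
    grt C E (d₁ + d₂) (mmul a b) = mmul (grt C D d₁ a) (grt D E d₂ b) := by
  funext x z
  rw [grt, mmul, mmul]
  split_ifs with htot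
  · refine Finset.sum_congr rfl fun y _ => ?_
    rw [grt, grt]
    by_cases h1 : a x y = 0
    · simp [h1]
    by_cases h2 : b y z = 0
    · split_ifs <;> simp [h2]
    have s1 := hfa x y h1
    have s2 := hfb y z h2
    rw [if_pos (by omega), if_pos (by omega)]
  · symm
    refine Finset.sum_eq_zero fun y _ => ?_
    rw [grt, grt]
    by_cases h1 : a x y = 0
    · simp [h1]
    by_cases h2 : b y z = 0
    · split_ifs <;> simp [h2]
    have s1 := hfa x y h1
    have s2 := hfb y z h2
    split_ifs <;> first | omega | simp

lemma grt_add {deg : ℤ} (a b : C.ι → D.ι → F2) :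
    grt C D deg (fun x y => a x y + b x y) =
      fun x y => grt C D deg a x y + grt C D deg b x y := by
  funext x y
  rw [grt, grt, grt]
  split_ifs <;> simp

lemma c_valid : Valid C C (-1) C.c := by
  intro x y h
  obtain ⟨k, hk⟩ := C.hM x y h
  exact ⟨k, by omega⟩

lemma c_filt : Filt C C (-1) C.c := by
  intro x y h
  have := C.hA x y h
  omega

lemma pDiff_eq (f : C.PMod) : C.pDiff f = ofMat C C (-1) C.c f := by
  funext y
  rw [BasedComplex.pDiff]
  dsimp only [LinearMap.coe_mk, AddHom.coe_mk]
  rw [ofMat_apply]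
  refine Finset.sum_congr rfl fun x _ => ?_
  congr 2

lemma grDiff_eq (f : C.PMod) : C.grDiff f = ofMat C C (-1) (grt C C (-1) C.c) f := by
  funext y
  rw [BasedComplex.grDiff]
  dsimp only [LinearMap.coe_mk, AddHom.coe_mk]
  rw [ofMat_apply]
  refine Finset.sum_congr rfl fun x _ => ?_
  congr 1
  have he : ((C.M y - C.M x + 1) / 2).toNat = expo C C (-1) x y := by
    unfold expo
    omega
  rw [grt]
  by_cases h1 : 2 * (C.A y - C.A x) = C.M y - C.M x - (-1)
  · rw [if_pos h1, if_pos (show 2 * (C.A y - C.A x) = C.M y - C.M x + 1 by omega), he]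
  · rw [if_neg h1, if_neg (show ¬ 2 * (C.A y - C.A x) = C.M y - C.M x + 1 by omega),
      map_zero, zero_mul]

lemma grTrunc_eq {φ : C.PMod →ₗ[PU] D.PMod}
    (hg : ∀ g f, C.PHomog g f → D.PHomog (g + 0) (φ f)) (f : C.PMod) :
    grTrunc C D φ f = ofMat C D 0 (grt C D 0 (matOf 0 φ)) f := by
  funext y
  rw [grTrunc]
  dsimp only [LinearMap.coe_mk, AddHom.coe_mk]
  rw [ofMat_apply]
  refine Finset.sum_congr rfl fun x _ => ?_
  congr 1
  have hrep : φ (Pi.single x 1) y = Polynomial.C (matOf 0 φ x y) *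
      Polynomial.X ^ expo C D 0 x y := by
    rw [matOf]
    exact poly_single_coeff (fun k hk => (graded_single_coeff hg x y k hk).1)
  by_cases h0 : matOf 0 φ x y = 0
  · rw [hrep, h0]
    have hz : grt C D 0 (matOf 0 φ) x y = 0 := by
      rw [grt]
      split_ifs
      · exact h0
      · rfl
    rw [hz]
    simp
  · rw [hrep, Polynomial.support_C_mul_X_pow _ h0, Finset.sum_singleton]
    have hcoeff : (Polynomial.C (matOf 0 φ x y) * Polynomial.X ^ expo C D 0 x y).coeff
        (expo C D 0 x y) = matOf 0 φ x y := by
      simp [Polynomial.coeff_C_mul, Polynomial.coeff_X_pow]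
    rw [hcoeff, grt]
    have h4 := expo_spec (matOf_valid hg) h0
    split_ifs with c1 c2 c2
    · rw [Polynomial.C_mul_X_pow_eq_monomial]
    · omega
    · omega
    · simp
end Aux
namespace Aux
open BasedComplex Polynomial

variable {C D : BasedComplex}

lemma F2_add_self (a : F2) : a + a = 0 := by revert a; decide

lemma F2_eq_one {a : F2} (h : a ≠ 0) : a = 1 := by revert a; decide

lemma F2_eq_of_add_eq_zero {a b : F2} (h : a + b = 0) : a = b := by
  revert a b; decide

lemma delta_mul (u : C.ι) (g : C.ι → F2) :
    (∑ w, (if w = u then (1:F2) else 0) * g w) = g u := by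
  rw [Finset.sum_congr rfl (fun w _ => by rw [ite_mul, one_mul, zero_mul])]
  rw [Finset.sum_ite_eq' Finset.univ u g]
  simp

lemma mul_delta (u : C.ι) (g : C.ι → F2) :
    (∑ w, g w * (if w = u then (1:F2) else 0)) = g u := by
  rw [Finset.sum_congr rfl (fun w _ => by rw [mul_ite, mul_one, mul_zero])]
  rw [Finset.sum_ite_eq' Finset.univ u g]
  simp

lemma sum_split {x₀ y₀ : C.ι} (hne : x₀ ≠ y₀) (g : C.ι → F2) :
    ∑ v : C.ι, g v =
      (∑ v : {z : C.ι // z ≠ x₀ ∧ z ≠ y₀}, g v.1) + (g x₀ + g y₀) := by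
  classical
  have h1 : ∑ v ∈ ((Finset.univ.erase x₀).erase y₀), g v =
      ∑ v : {z : C.ι // z ≠ x₀ ∧ z ≠ y₀}, g v.1 := by
    apply Finset.sum_subtype
    intro z
    simp [Finset.mem_erase, and_comm]
  have h2 : ∑ v ∈ (Finset.univ.erase x₀), g v =
      (∑ v ∈ ((Finset.univ.erase x₀).erase y₀), g v) + g y₀ := by
    rw [add_comm, Finset.add_sum_erase]
    simp [Finset.mem_erase, Ne.symm hne]
  have h3 : ∑ v : C.ι, g v = (∑ v ∈ (Finset.univ.erase x₀), g v) + g x₀ := by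
    rw [add_comm, Finset.add_sum_erase]
    simp
  rw [h3, h2, h1]
  ring

lemma sum_split' {x₀ y₀ : C.ι} (hne : x₀ ≠ y₀) (g : C.ι → F2) :
    (∑ v : {z : C.ι // z ≠ x₀ ∧ z ≠ y₀}, g v.1) = (∑ v : C.ι, g v) + (g x₀ + g y₀) := by
  rw [sum_split hne g, add_assoc, F2_add_self, add_zero]

section Cancel

variable (E : BasedComplex) (x₀ y₀ : E.ι)

/-- extended inclusion matrix -/
def mIe (v w : E.ι) : F2 :=
  (if w = v then 1 else 0) + (if w = x₀ then 1 else 0) * E.c v y₀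

/-- extended projection matrix -/
def mPe (w z : E.ι) : F2 :=
  (if w = z then 1 else 0) + (if w = y₀ then 1 else 0) * E.c x₀ z

/-- the small homotopy -/
def mh (w v : E.ι) : F2 :=
  (if w = y₀ then 1 else 0) * (if v = x₀ then 1 else 0)

/-- the Gaussian-eliminated differential, extended to all of `E.ι` -/
def ce (z w : E.ι) : F2 :=
  E.c z w + E.c z y₀ * E.c x₀ w

variable {E x₀ y₀}
variable (hxy : E.c x₀ y₀ = 1) (hMxy : E.M y₀ = E.M x₀ - 1) (hAxy : E.A y₀ = E.A x₀)

section basic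

include hMxy

lemma cancel_ne : x₀ ≠ y₀ := fun h => by rw [h] at hMxy; omega

lemma cxx : E.c x₀ x₀ = 0 := by
  by_contra h
  obtain ⟨k, hk⟩ := E.hM x₀ x₀ h
  omega

lemma cyy : E.c y₀ y₀ = 0 := by
  by_contra h
  obtain ⟨k, hk⟩ := E.hM y₀ y₀ h
  omega

end basic

include hxy hMxy hAxy in
/-- The cancelled complex. -/
@[reducible]
noncomputable def cancel : BasedComplex where
  ι := {z : E.ι // z ≠ x₀ ∧ z ≠ y₀}
  M := fun z => E.M z.1
  A := fun z => E.A z.1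
  c := fun z w => ce E x₀ y₀ z.1 w.1
  hM := by
    intro z w h
    simp only [ce] at h
    by_cases h1 : E.c z.1 w.1 ≠ 0
    · exact E.hM z.1 w.1 h1
    · push_neg at h1
      rw [h1, zero_add] at h
      have h2 : E.c z.1 y₀ ≠ 0 := fun h0 => h (by rw [h0, zero_mul])
      have h3 : E.c x₀ w.1 ≠ 0 := fun h0 => h (by rw [h0, mul_zero])
      obtain ⟨k1, hk1⟩ := E.hM z.1 y₀ h2
      obtain ⟨k2, hk2⟩ := E.hM x₀ w.1 h3
      exact ⟨k1 + k2, by push_cast; omega⟩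
  hA := by
    intro z w h
    simp only [ce] at h
    by_cases h1 : E.c z.1 w.1 ≠ 0
    · exact E.hA z.1 w.1 h1
    · push_neg at h1
      rw [h1, zero_add] at h
      have h2 : E.c z.1 y₀ ≠ 0 := fun h0 => h (by rw [h0, zero_mul])
      have h3 : E.c x₀ w.1 ≠ 0 := fun h0 => h (by rw [h0, mul_zero])
      have g1 := E.hA z.1 y₀ h2
      have g2 := E.hA x₀ w.1 h3
      obtain ⟨k1, hk1⟩ := E.hM z.1 y₀ h2
      obtain ⟨k2, hk2⟩ := E.hM x₀ w.1 h3
      omega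
  d2 := by
    intro z w
    rw [sum_split' (cancel_ne hMxy) (fun v => ce E x₀ y₀ z.1 v * ce E x₀ y₀ v w.1)]
    have e1 : ce E x₀ y₀ z.1 x₀ * ce E x₀ y₀ x₀ w.1 = 0 := by
      simp only [ce]
      rw [cxx hMxy, hxy, mul_zero, add_zero, one_mul, F2_add_self, mul_zero]
    have e2 : ce E x₀ y₀ z.1 y₀ * ce E x₀ y₀ y₀ w.1 = 0 := by
      simp only [ce]
      rw [hxy, mul_one, F2_add_self, zero_mul]
    rw [e1, e2, add_zero, add_zero]
    have expand : ∀ v, ce E x₀ y₀ z.1 v * ce E x₀ y₀ v w.1 =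
        E.c z.1 v * E.c v w.1 + E.c z.1 y₀ * (E.c x₀ v * E.c v w.1) +
          ((E.c z.1 v * E.c v y₀) * E.c x₀ w.1 +
            E.c z.1 y₀ * ((E.c x₀ v * E.c v y₀) * E.c x₀ w.1)) := by
      intro v
      simp only [ce]
      ring
    have s1 : (∑ v, E.c z.1 v * E.c v w.1) = 0 := E.d2 z.1 w.1
    have s2 : (∑ v, E.c z.1 y₀ * (E.c x₀ v * E.c v w.1)) = 0 := by
      rw [← Finset.mul_sum, E.d2 x₀ w.1, mul_zero]
    have s3 : (∑ v, E.c z.1 v * E.c v y₀ * E.c x₀ w.1) = 0 := by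
      rw [← Finset.sum_mul, E.d2 z.1 y₀, zero_mul]
    have s4 : (∑ v, E.c z.1 y₀ * (E.c x₀ v * E.c v y₀ * E.c x₀ w.1)) = 0 := by
      have : ∀ v, E.c z.1 y₀ * (E.c x₀ v * E.c v y₀ * E.c x₀ w.1) =
          E.c z.1 y₀ * E.c x₀ w.1 * (E.c x₀ v * E.c v y₀) := fun v => by ring
      rw [Finset.sum_congr rfl fun v _ => this v, ← Finset.mul_sum, E.d2 x₀ y₀, mul_zero]
    rw [Finset.sum_congr rfl fun v _ => expand v, Finset.sum_add_distrib, Finset.sum_add_distrib,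
      Finset.sum_add_distrib, s1, s2, s3, s4]
    simp

end Cancel

end Aux
namespace Aux
open BasedComplex Polynomial

variable {C : BasedComplex}

lemma delta_mul' (u : C.ι) (g : C.ι → F2) :
    (∑ w, (if u = w then (1:F2) else 0) * g w) = g u := by
  rw [Finset.sum_congr rfl (fun w _ => by rw [ite_mul, one_mul, zero_mul])]
  rw [Finset.sum_ite_eq Finset.univ u g]
  simp

lemma mul_delta' (u : C.ι) (g : C.ι → F2) :
    (∑ w, g w * (if u = w then (1:F2) else 0)) = g u := by
  rw [Finset.sum_congr rfl (fun w _ => by rw [mul_ite, mul_one, mul_zero])]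
  rw [Finset.sum_ite_eq Finset.univ u g]
  simp

lemma sum_ifc (P : Prop) [Decidable P] (g : C.ι → F2) (h0 : (∑ v, g v) = 0) :
    (∑ v, (if P then (1:F2) else 0) * g v) = 0 := by
  rw [← Finset.mul_sum, h0, mul_zero]

section Cancel2

variable {E : BasedComplex} {x₀ y₀ : E.ι}
variable (hxy : E.c x₀ y₀ = 1) (hMxy : E.M y₀ = E.M x₀ - 1) (hAxy : E.A y₀ = E.A x₀)

lemma mIe_x₀ (v : E.ι) (hv : E.c x₀ y₀ = 1) : mIe E x₀ y₀ x₀ v = 0 := by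
  rw [mIe, hv, mul_one, F2_add_self]

lemma mPe_y₀ (w : E.ι) (hv : E.c x₀ y₀ = 1) : mPe E x₀ y₀ w y₀ = 0 := by
  rw [mPe, hv, mul_one, F2_add_self]

lemma ce_zx₀ (z : E.ι) (hMxy : E.M y₀ = E.M x₀ - 1) : ce E x₀ y₀ z x₀ = E.c z x₀ := by
  rw [ce, cxx hMxy, mul_zero, add_zero]

lemma ce_zy₀ (z : E.ι) (hv : E.c x₀ y₀ = 1) : ce E x₀ y₀ z y₀ = 0 := by
  rw [ce, hv, mul_one, F2_add_self]

lemma ce_x₀z (z : E.ι) (hv : E.c x₀ y₀ = 1) : ce E x₀ y₀ x₀ z = 0 := by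
  rw [ce, hv, one_mul, F2_add_self]

lemma ce_y₀z (z : E.ι) (hMxy : E.M y₀ = E.M x₀ - 1) : ce E x₀ y₀ y₀ z = E.c y₀ z := by
  rw [ce, cyy hMxy, zero_mul, add_zero]

lemma if_mul_sum (P : Prop) [Decidable P] (g : E.ι → F2) (a : F2)
    (h : (∑ v, g v) = a) :
    (∑ v, (if P then (1:F2) else 0) * g v) = (if P then (1:F2) else 0) * a := by
  rw [← Finset.mul_sum, h]

include hxy hMxy hAxy

lemma mI_valid : Valid (cancel hxy hMxy hAxy) E 0 (fun z w => mIe E x₀ y₀ z.1 w) := by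
  intro z w h
  dsimp only [cancel] at *
  rw [mIe] at h
  rcases eq_or_ne w z.1 with rfl | hw
  · exact ⟨0, by omega⟩
  · rw [if_neg hw, zero_add] at h
    rcases eq_or_ne w x₀ with rfl | hw2
    · have hc : E.c z.1 y₀ ≠ 0 := fun h0 => h (by rw [h0, mul_zero])
      obtain ⟨k, hk⟩ := E.hM z.1 y₀ hc
      exact ⟨k, by omega⟩
    · rw [if_neg hw2, zero_mul] at h
      exact absurd rfl h

lemma mI_filt : Filt (cancel hxy hMxy hAxy) E 0 (fun z w => mIe E x₀ y₀ z.1 w) := by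
  intro z w h
  dsimp only [cancel] at *
  rw [mIe] at h
  rcases eq_or_ne w z.1 with rfl | hw
  · omega
  · rw [if_neg hw, zero_add] at h
    rcases eq_or_ne w x₀ with rfl | hw2
    · have hc : E.c z.1 y₀ ≠ 0 := fun h0 => h (by rw [h0, mul_zero])
      have := E.hA z.1 y₀ hc
      obtain ⟨k, hk⟩ := E.hM z.1 y₀ hc
      omega
    · rw [if_neg hw2, zero_mul] at h
      exact absurd rfl h

lemma mP_valid : Valid E (cancel hxy hMxy hAxy) 0 (fun w z => mPe E x₀ y₀ w z.1) := by
  intro w z h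
  dsimp only [cancel] at *
  rw [mPe] at h
  rcases eq_or_ne w z.1 with rfl | hw
  · exact ⟨0, by omega⟩
  · rw [if_neg hw, zero_add] at h
    rcases eq_or_ne w y₀ with rfl | hw2
    · have hc : E.c x₀ z.1 ≠ 0 := fun h0 => h (by rw [h0, mul_zero])
      obtain ⟨k, hk⟩ := E.hM x₀ z.1 hc
      exact ⟨k, by omega⟩
    · rw [if_neg hw2, zero_mul] at h
      exact absurd rfl h

lemma mP_filt : Filt E (cancel hxy hMxy hAxy) 0 (fun w z => mPe E x₀ y₀ w z.1) := by
  intro w z h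
  dsimp only [cancel] at *
  rw [mPe] at h
  rcases eq_or_ne w z.1 with rfl | hw
  · omega
  · rw [if_neg hw, zero_add] at h
    rcases eq_or_ne w y₀ with rfl | hw2
    · have hc : E.c x₀ z.1 ≠ 0 := fun h0 => h (by rw [h0, mul_zero])
      have := E.hA x₀ z.1 hc
      obtain ⟨k, hk⟩ := E.hM x₀ z.1 hc
      omega
    · rw [if_neg hw2, zero_mul] at h
      exact absurd rfl h

omit hxy hAxy in
lemma mh_valid : Valid E E 1 (mh E x₀ y₀) := by
  intro w v h
  rw [mh] at h
  rcases eq_or_ne w y₀ with rfl | hw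
  · rcases eq_or_ne v x₀ with rfl | hv
    · exact ⟨0, by omega⟩
    · rw [if_neg hv, mul_zero] at h
      exact absurd rfl h
  · rw [if_neg hw, zero_mul] at h
    exact absurd rfl h

omit hxy in
lemma mh_filt : Filt E E 1 (mh E x₀ y₀) := by
  intro w v h
  rw [mh] at h
  rcases eq_or_ne w y₀ with rfl | hw
  · rcases eq_or_ne v x₀ with rfl | hv
    · omega
    · rw [if_neg hv, mul_zero] at h
      exact absurd rfl h
  · rw [if_neg hw, zero_mul] at h
    exact absurd rfl h

lemma ident1 : mmul (fun (z : (cancel hxy hMxy hAxy).ι) w => mIe E x₀ y₀ z.1 w) E.c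
    = mmul (cancel hxy hMxy hAxy).c (fun z w => mIe E x₀ y₀ z.1 w) := by
  funext z w
  have hL : mmul (fun (z : (cancel hxy hMxy hAxy).ι) w => mIe E x₀ y₀ z.1 w) E.c z w
      = E.c z.1 w + E.c z.1 y₀ * E.c x₀ w := by
    rw [mmul]
    rw [Finset.sum_congr rfl (fun v _ => (by rw [mIe]; ring :
      mIe E x₀ y₀ z.1 v * E.c v w =
        (if v = z.1 then (1:F2) else 0) * E.c v w +
          (if v = x₀ then (1:F2) else 0) * (E.c z.1 y₀ * E.c v w)))]
    rw [Finset.sum_add_distrib, delta_mul, delta_mul]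
  rw [hL, mmul]
  dsimp only [cancel]
  rw [sum_split' (cancel_ne hMxy) (fun v => ce E x₀ y₀ z.1 v * mIe E x₀ y₀ v w)]
  rw [ce_zy₀ z.1 hxy, zero_mul, mIe_x₀ w hxy, mul_zero, add_zero, add_zero]
  rw [Finset.sum_congr rfl (fun v _ => (by rw [ce, mIe]; ring :
    ce E x₀ y₀ z.1 v * mIe E x₀ y₀ v w =
      E.c z.1 v * (if w = v then (1:F2) else 0) +
        (E.c z.1 y₀ * E.c x₀ v) * (if w = v then (1:F2) else 0) +
          ((if w = x₀ then (1:F2) else 0) * (E.c z.1 v * E.c v y₀) +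
            (if w = x₀ then (1:F2) else 0) * (E.c z.1 y₀ * (E.c x₀ v * E.c v y₀)))))]
  rw [Finset.sum_add_distrib, Finset.sum_add_distrib, Finset.sum_add_distrib]
  rw [mul_delta' w (fun v => E.c z.1 v), mul_delta' w (fun v => E.c z.1 y₀ * E.c x₀ v)]
  rw [sum_ifc _ _ (E.d2 z.1 y₀)]
  rw [sum_ifc _ _ (by rw [← Finset.mul_sum, E.d2 x₀ y₀, mul_zero] :
    (∑ v, E.c z.1 y₀ * (E.c x₀ v * E.c v y₀)) = 0)]
  rw [add_zero, add_zero]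

lemma ident2 : mmul E.c (fun w (z : (cancel hxy hMxy hAxy).ι) => mPe E x₀ y₀ w z.1)
    = mmul (fun w (z : (cancel hxy hMxy hAxy).ι) => mPe E x₀ y₀ w z.1)
        (cancel hxy hMxy hAxy).c := by
  funext w z
  have hL : mmul E.c (fun w (z : (cancel hxy hMxy hAxy).ι) => mPe E x₀ y₀ w z.1) w z
      = E.c w z.1 + E.c w y₀ * E.c x₀ z.1 := by
    rw [mmul]
    rw [Finset.sum_congr rfl (fun v _ => (by rw [mPe]; ring :
      E.c w v * mPe E x₀ y₀ v z.1 =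
        E.c w v * (if v = z.1 then (1:F2) else 0) +
          (E.c w v * E.c x₀ z.1) * (if v = y₀ then (1:F2) else 0)))]
    rw [Finset.sum_add_distrib, mul_delta z.1 (fun v => E.c w v),
      mul_delta y₀ (fun v => E.c w v * E.c x₀ z.1)]
  rw [hL, mmul]
  dsimp only [cancel]
  rw [sum_split' (cancel_ne hMxy) (fun v => mPe E x₀ y₀ w v * ce E x₀ y₀ v z.1)]
  rw [ce_x₀z z.1 hxy, mul_zero, mPe_y₀ w hxy, zero_mul, add_zero, add_zero]
  rw [Finset.sum_congr rfl (fun v _ => (by rw [ce, mPe]; ring :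
    mPe E x₀ y₀ w v * ce E x₀ y₀ v z.1 =
      E.c v z.1 * (if w = v then (1:F2) else 0) +
        (E.c x₀ z.1 * E.c v y₀) * (if w = v then (1:F2) else 0) +
          ((if w = y₀ then (1:F2) else 0) * (E.c x₀ v * E.c v z.1) +
            (if w = y₀ then (1:F2) else 0) * (E.c x₀ z.1 * (E.c x₀ v * E.c v y₀)))))]
  rw [Finset.sum_add_distrib, Finset.sum_add_distrib, Finset.sum_add_distrib]
  rw [mul_delta' w (fun v => E.c v z.1), mul_delta' w (fun v => E.c x₀ z.1 * E.c v y₀)]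
  rw [sum_ifc _ _ (E.d2 x₀ z.1)]
  rw [sum_ifc _ _ (by rw [← Finset.mul_sum, E.d2 x₀ y₀, mul_zero] :
    (∑ v, E.c x₀ z.1 * (E.c x₀ v * E.c v y₀)) = 0)]
  rw [add_zero, add_zero]
  ring

lemma ident3 : mmul (fun (z : (cancel hxy hMxy hAxy).ι) w => mIe E x₀ y₀ z.1 w)
      (fun w (z : (cancel hxy hMxy hAxy).ι) => mPe E x₀ y₀ w z.1)
    = idm (cancel hxy hMxy hAxy) := by
  funext z z'
  rw [mmul, idm]
  rw [Finset.sum_congr rfl (fun v _ => (by rw [mIe, mPe]; ring :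
    mIe E x₀ y₀ z.1 v * mPe E x₀ y₀ v z'.1 =
      (if v = z.1 then (1:F2) else 0) * (if v = z'.1 then (1:F2) else 0) +
        (if v = z.1 then (1:F2) else 0) * ((if v = y₀ then (1:F2) else 0) * E.c x₀ z'.1) +
          ((if v = x₀ then (1:F2) else 0) * (E.c z.1 y₀ * (if v = z'.1 then (1:F2) else 0)) +
            (if v = x₀ then (1:F2) else 0) *
              (E.c z.1 y₀ * ((if v = y₀ then (1:F2) else 0) * E.c x₀ z'.1)))))]
  rw [Finset.sum_add_distrib, Finset.sum_add_distrib, Finset.sum_add_distrib]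
  rw [delta_mul z.1 (fun v => if v = z'.1 then (1:F2) else 0),
    delta_mul z.1 (fun v => (if v = y₀ then (1:F2) else 0) * E.c x₀ z'.1),
    delta_mul x₀ (fun v => E.c z.1 y₀ * (if v = z'.1 then (1:F2) else 0)),
    delta_mul x₀ (fun v => E.c z.1 y₀ * ((if v = y₀ then (1:F2) else 0) * E.c x₀ z'.1))]
  rw [if_neg z.2.2, if_neg (fun h : x₀ = z'.1 => z'.2.1 h.symm),
    if_neg (cancel_ne hMxy)]
  have : (if z.1 = z'.1 then (1:F2) else 0) = (if z = z' then (1:F2) else 0) := by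
    apply if_congr _ rfl rfl
    exact ⟨fun h => Subtype.ext h, fun h => congrArg Subtype.val h⟩
  rw [this]
  simp

lemma ident4 : (fun w v => mmul (fun w (z : (cancel hxy hMxy hAxy).ι) => mPe E x₀ y₀ w z.1)
      (fun z w => mIe E x₀ y₀ z.1 w) w v + idm E w v)
    = (fun w v => mmul E.c (mh E x₀ y₀) w v + mmul (mh E x₀ y₀) E.c w v) := by
  funext w v
  have hL : mmul (fun w (z : (cancel hxy hMxy hAxy).ι) => mPe E x₀ y₀ w z.1)
      (fun z w => mIe E x₀ y₀ z.1 w) w v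
      = (if v = w then (1:F2) else 0) + (if v = x₀ then (1:F2) else 0) * E.c w y₀ +
          ((if w = y₀ then (1:F2) else 0) * E.c x₀ v +
            (if w = y₀ then (1:F2) else 0) * 0) := by
    rw [mmul]
    dsimp only [cancel]
    rw [sum_split' (cancel_ne hMxy) (fun z => mPe E x₀ y₀ w z * mIe E x₀ y₀ z v)]
    rw [mIe_x₀ v hxy, mul_zero, mPe_y₀ w hxy, zero_mul, add_zero, add_zero]
    rw [Finset.sum_congr rfl (fun z _ => (by rw [mIe, mPe]; ring :
      mPe E x₀ y₀ w z * mIe E x₀ y₀ z v =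
        (if w = z then (1:F2) else 0) * (if v = z then (1:F2) else 0) +
          (if w = z then (1:F2) else 0) * ((if v = x₀ then (1:F2) else 0) * E.c z y₀) +
            ((if w = y₀ then (1:F2) else 0) * (E.c x₀ z * (if v = z then (1:F2) else 0)) +
              (if w = y₀ then (1:F2) else 0) *
                ((if v = x₀ then (1:F2) else 0) * (E.c x₀ z * E.c z y₀)))))]
    rw [Finset.sum_add_distrib, Finset.sum_add_distrib, Finset.sum_add_distrib]
    rw [delta_mul' w (fun z => if v = z then (1:F2) else 0),
      delta_mul' w (fun z => (if v = x₀ then (1:F2) else 0) * E.c z y₀),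
      if_mul_sum (w = y₀) (fun z => E.c x₀ z * (if v = z then (1:F2) else 0)) (E.c x₀ v)
        (mul_delta' v (fun z => E.c x₀ z)),
      if_mul_sum (w = y₀) (fun z => (if v = x₀ then (1:F2) else 0) * (E.c x₀ z * E.c z y₀)) 0
        (sum_ifc _ _ (E.d2 x₀ y₀))]
  have hR1 : mmul E.c (mh E x₀ y₀) w v
      = (E.c w y₀ * (if v = x₀ then (1:F2) else 0)) := by
    rw [mmul]
    rw [Finset.sum_congr rfl (fun u _ => (by rw [mh]; ring :
      E.c w u * mh E x₀ y₀ u v =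
        (E.c w u * (if v = x₀ then (1:F2) else 0)) * (if u = y₀ then (1:F2) else 0)))]
    rw [mul_delta y₀ (fun u => E.c w u * (if v = x₀ then (1:F2) else 0))]
  have hR2 : mmul (mh E x₀ y₀) E.c w v
      = (if w = y₀ then (1:F2) else 0) * E.c x₀ v := by
    rw [mmul]
    rw [Finset.sum_congr rfl (fun u _ => (by rw [mh]; ring :
      mh E x₀ y₀ w u * E.c u v =
        (if w = y₀ then (1:F2) else 0) * ((if u = x₀ then (1:F2) else 0) * E.c u v)))]
    rw [if_mul_sum (w = y₀) (fun u => (if u = x₀ then (1:F2) else 0) * E.c u v) (E.c x₀ v)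
      (delta_mul x₀ (fun u => E.c u v))]
  rw [hL, hR1, hR2, idm]
  have hcomm : (if v = w then (1:F2) else 0) = (if w = v then (1:F2) else 0) := by
    exact if_congr eq_comm rfl rfl
  rw [hcomm, mul_zero, add_zero]
  have key : ∀ a b c : F2, a + b + c + a = b + c := by decide
  rw [key]
  ring

end Cancel2

end Aux
namespace Aux
open BasedComplex Polynomial

variable {C D E : BasedComplex}

lemma ofMat_zero {deg : ℤ} (f : C.PMod) : ofMat C D deg (fun _ _ => (0:F2)) f = 0 := by
  funext y
  rw [ofMat_apply]
  refine Finset.sum_eq_zero fun x _ => ?_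
  simp

lemma mmul_add_left' {C D E : BasedComplex} (a b : C.ι → D.ι → F2) (c : D.ι → E.ι → F2)
    (x : C.ι) (z : E.ι) :
    mmul (fun x y => a x y + b x y) c x z = mmul a c x z + mmul b c x z := by
  rw [mmul, mmul, mmul, ← Finset.sum_add_distrib]
  exact Finset.sum_congr rfl fun y _ => add_mul _ _ _

lemma mmul_add_right' {C D E : BasedComplex} (a : C.ι → D.ι → F2) (b c : D.ι → E.ι → F2)
    (x : C.ι) (z : E.ι) :
    mmul a (fun x y => b x y + c x y) x z = mmul a b x z + mmul a c x z := by
  rw [mmul, mmul, mmul, ← Finset.sum_add_distrib]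
  exact Finset.sum_congr rfl fun y _ => mul_add _ _ _

lemma mmul_idm_right (a : C.ι → D.ι → F2) : mmul a (idm D) = a := by
  funext x z
  rw [mmul]
  have : ∀ y, a x y * idm D y z = a x y * (if y = z then (1:F2) else 0) := fun y => rfl
  rw [Finset.sum_congr rfl fun y _ => this y, mul_delta z (fun y => a x y)]

lemma mmul_idm_left (a : C.ι → D.ι → F2) : mmul (idm C) a = a := by
  funext x z
  rw [mmul]
  have : ∀ y, idm C x y * a y z = (if x = y then (1:F2) else 0) * a y z := fun y => rfl
  rw [Finset.sum_congr rfl fun y _ => this y, delta_mul' x (fun y => a y z)]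

lemma grsq (f : C.PMod) : C.grDiff (C.grDiff f) = 0 := by
  rw [grDiff_eq, grDiff_eq, ofMat_comp (grt_valid c_valid) (grt_valid c_valid)]
  have hz : mmul (grt C C (-1) C.c) (grt C C (-1) C.c) = fun _ _ => (0:F2) := by
    rw [← grt_mmul c_valid c_filt c_valid c_filt]
    have h0 : mmul C.c C.c = fun _ _ => (0:F2) := by
      funext x z
      exact C.d2 x z
    rw [h0]
    funext x z
    rw [grt]
    split_ifs <;> rfl
  rw [hz, ofMat_zero]

lemma exists_unit_pair (hne : Nonempty C.ι)
    (hacyc : ∀ f, C.grDiff f = 0 → ∃ g, C.grDiff g = f) :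
    ∃ x₀ y₀, C.c x₀ y₀ = 1 ∧ C.M y₀ = C.M x₀ - 1 ∧ C.A y₀ = C.A x₀ := by
  by_contra hcon
  push_neg at hcon
  have hpos : ∀ x y, grt C C (-1) C.c x y ≠ 0 → 1 ≤ expo C C (-1) x y := by
    intro x y h
    rw [grt] at h
    split_ifs at h with hc
    · obtain ⟨k, hk⟩ := C.hM x y h
      have he : (expo C C (-1) x y : ℤ) = k := by
        unfold expo
        omega
      by_contra hlt
      have h1 : C.M y = C.M x - 1 := by omega
      have h2 : C.A y = C.A x := by omega
      exact (hcon x y (F2_eq_one h) h1) h2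
    · exact absurd rfl h
  have coeff0 : ∀ g y, (C.grDiff g y).coeff 0 = 0 := by
    intro g y
    rw [grDiff_eq, ofMat_apply, Polynomial.finset_sum_coeff]
    refine Finset.sum_eq_zero fun x _ => ?_
    rw [coeff_term]
    by_cases h : grt C C (-1) C.c x y = 0
    · rw [h]
      split_ifs <;> simp
    · have := hpos x y h
      rw [if_neg (by omega)]
  have kertriv : ∀ f, C.grDiff f = 0 → f = 0 := by
    have aux : ∀ N : ℕ, ∀ f, C.grDiff f = 0 → ∀ x k, k < N → (f x).coeff k = 0 := by
      intro N
      induction N with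
      | zero => intro f hf x k hk; omega
      | succ N ih =>
        intro f hf x k hk
        obtain ⟨g, hg⟩ := hacyc f hf
        have hc0 : ∀ x', (f x').coeff 0 = 0 := by
          intro x'
          rw [← hg]
          exact coeff0 g x'
        have hfh : f = (Polynomial.X : PU) • (fun x' => (f x').divX) := by
          funext x'
          rw [Pi.smul_apply, smul_eq_mul]
          conv_lhs => rw [← Polynomial.X_mul_divX_add (f x')]
          rw [hc0 x', map_zero, add_zero]
        have hker : C.grDiff (fun x' => (f x').divX) = 0 := by
          have h5 : C.grDiff f = (Polynomial.X : PU) • C.grDiff (fun x' => (f x').divX) := by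
            conv_lhs => rw [hfh]
            rw [map_smul]
          funext y
          have h2 := congrFun (h5.symm.trans hf) y
          rw [Pi.smul_apply, smul_eq_mul, Pi.zero_apply] at h2
          rcases mul_eq_zero.mp h2 with h3 | h3
          · exact absurd h3 Polynomial.X_ne_zero
          · exact h3
        rcases Nat.eq_zero_or_pos k with rfl | hk0
        · exact hc0 x
        · have hco : (f x).coeff k = ((f x).divX).coeff (k - 1) := by
            conv_lhs => rw [hfh]
            rw [Pi.smul_apply, smul_eq_mul]
            conv_lhs => rw [show k = (k-1)+1 by omega]
            rw [Polynomial.coeff_X_mul]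
          rw [hco]
          exact ih (fun x' => (f x').divX) hker x (k-1) (by omega)
    intro f hf
    funext x
    ext k
    rw [Pi.zero_apply, Polynomial.coeff_zero]
    exact aux (k+1) f hf x k (by omega)
  obtain ⟨x⟩ := hne
  have h1 : C.grDiff (Pi.single x 1) = 0 := kertriv _ (grsq _)
  have h2 := kertriv _ h1
  have h3 := congrFun h2 x
  rw [Pi.single_eq_same, Pi.zero_apply] at h3
  exact one_ne_zero h3

end Aux
namespace Aux
open BasedComplex Polynomial

lemma contraction : ∀ (n : ℕ) (E : BasedComplex), Fintype.card E.ι = n →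
    (∀ f, E.grDiff f = 0 → ∃ g, E.grDiff g = f) →
    ∃ h : E.ι → E.ι → F2, Valid E E 1 h ∧ Filt E E 1 h ∧
      (fun w v => mmul E.c h w v + mmul h E.c w v) = idm E := by
  intro n
  induction n using Nat.strong_induction_on with
  | _ n ih =>
    intro E hcard hacyc
    rcases Nat.eq_zero_or_pos n with rfl | hpos
    · have he : IsEmpty E.ι := Fintype.card_eq_zero_iff.mp hcard
      refine ⟨fun _ _ => 0, fun x y h => absurd rfl h, fun x y h => absurd rfl h, ?_⟩
      funext w v
      exact he.elim w
    have hne : Nonempty E.ι := Fintype.card_pos_iff.mp (by omega)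
    obtain ⟨x₀, y₀, hxy, hMxy, hAxy⟩ := exists_unit_pair hne hacyc
    have hvI := mI_valid hxy hMxy hAxy
    have hfI := mI_filt hxy hMxy hAxy
    have hvP := mP_valid hxy hMxy hAxy
    have hfP := mP_filt hxy hMxy hAxy
    set E' := cancel hxy hMxy hAxy with hE'
    set mIm : E'.ι → E.ι → F2 := fun z w => mIe E x₀ y₀ z.1 w with hmIm
    set mPm : E.ι → E'.ι → F2 := fun w z => mPe E x₀ y₀ w z.1 with hmPm
    have hlt : Fintype.card E'.ι < n := by
      rw [← hcard]
      exact Fintype.card_subtype_lt (x := x₀) (by simp)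
    -- gr-level identities
    have hg1 : mmul (grt E' E 0 mIm) (grt E E (-1) E.c)
        = mmul (grt E' E' (-1) E'.c) (grt E' E 0 mIm) := by
      have a1 := grt_mmul hvI hfI (c_valid (C := E)) (c_filt (C := E))
      have a2 := grt_mmul (c_valid (C := E')) (c_filt (C := E')) hvI hfI
      rw [show ((0:ℤ) + -1) = (-1:ℤ) from by norm_num] at a1
      rw [show ((-1:ℤ) + 0) = (-1:ℤ) from by norm_num] at a2
      rw [ident1 hxy hMxy hAxy] at a1
      exact a1.symm.trans a2
    have hg2 : mmul (grt E E (-1) E.c) (grt E E' 0 mPm)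
        = mmul (grt E E' 0 mPm) (grt E' E' (-1) E'.c) := by
      have a1 := grt_mmul (c_valid (C := E)) (c_filt (C := E)) hvP hfP
      have a2 := grt_mmul hvP hfP (c_valid (C := E')) (c_filt (C := E'))
      rw [show ((-1:ℤ) + 0) = (-1:ℤ) from by norm_num] at a1
      rw [show ((0:ℤ) + -1) = (-1:ℤ) from by norm_num] at a2
      rw [ident2 hxy hMxy hAxy] at a1
      exact a1.symm.trans a2
    have hg3 : mmul (grt E' E 0 mIm) (grt E E' 0 mPm) = idm E' := by
      have a3 := grt_mmul hvI hfI hvP hfP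
      rw [show ((0:ℤ) + 0) = (0:ℤ) from by norm_num] at a3
      rw [ident3 hxy hMxy hAxy, grt_idm] at a3
      exact a3.symm
    have hacyc' : ∀ f, E'.grDiff f = 0 → ∃ g, E'.grDiff g = f := by
      intro f hf
      have hFk : E.grDiff (ofMat E' E 0 (grt E' E 0 mIm) f) = 0 := by
        rw [grDiff_eq, ofMat_comp (grt_valid hvI) (grt_valid c_valid)]
        rw [show ((0:ℤ) + -1) = ((-1:ℤ) + 0) from by norm_num, hg1]
        rw [← ofMat_comp (grt_valid (c_valid (C := E'))) (grt_valid hvI)]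
        rw [← grDiff_eq f, hf, map_zero]
      obtain ⟨G, hG⟩ := hacyc _ hFk
      refine ⟨ofMat E E' 0 (grt E E' 0 mPm) G, ?_⟩
      rw [grDiff_eq, ofMat_comp (grt_valid hvP) (grt_valid (c_valid (C := E')))]
      rw [show ((0:ℤ) + -1) = ((-1:ℤ) + 0) from by norm_num, ← hg2]
      rw [← ofMat_comp (grt_valid (c_valid (C := E))) (grt_valid hvP)]
      rw [← grDiff_eq G, hG]
      rw [ofMat_comp (grt_valid hvI) (grt_valid hvP)]
      rw [show ((0:ℤ) + 0) = (0:ℤ) from by norm_num, hg3, ofMat_idm]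
    obtain ⟨h', hv', hf', hh'⟩ := ih _ hlt E' rfl hacyc'
    set Q : E.ι → E.ι → F2 := mmul (mmul mPm h') mIm with hQ
    refine ⟨fun w v => mh E x₀ y₀ w v + Q w v, ?_, ?_, ?_⟩
    · refine Valid.add (mh_valid hMxy) ?_
      have hv2 := Valid.mmul (Valid.mmul hvP hv') hvI
      rw [show ((0:ℤ) + 1 + 0) = (1:ℤ) from by norm_num] at hv2
      exact hv2
    · refine Filt.add (mh_filt hMxy hAxy) ?_
      have hf2 := Filt.mmul (Filt.mmul hfP hf') hfI
      rw [show ((0:ℤ) + 1 + 0) = (1:ℤ) from by norm_num] at hf2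
      exact hf2
    · have hQ1 : mmul E.c Q = mmul (mmul mPm (mmul E'.c h')) mIm := by
        rw [hQ, ← mmul_assoc E.c (mmul mPm h') mIm, ← mmul_assoc E.c mPm h',
          ident2 hxy hMxy hAxy, mmul_assoc mPm E'.c h']
      have hQ2 : mmul Q E.c = mmul (mmul mPm (mmul h' E'.c)) mIm := by
        rw [hQ, mmul_assoc (mmul mPm h') mIm E.c, ident1 hxy hMxy hAxy,
          ← mmul_assoc (mmul mPm h') E'.c mIm, mmul_assoc mPm h' E'.c]
      have hsum : ∀ w v, mmul E.c Q w v + mmul Q E.c w v = mmul mPm mIm w v := by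
        intro w v
        have e1 : mmul E.c Q w v = mmul (mmul mPm (mmul E'.c h')) mIm w v :=
          congrFun (congrFun hQ1 w) v
        have e2 : mmul Q E.c w v = mmul (mmul mPm (mmul h' E'.c)) mIm w v :=
          congrFun (congrFun hQ2 w) v
        rw [e1, e2, ← mmul_add_left' (mmul mPm (mmul E'.c h')) (mmul mPm (mmul h' E'.c)) mIm w v]
        have e3 : (fun (x : E.ι) (y : E'.ι) =>
            mmul mPm (mmul E'.c h') x y + mmul mPm (mmul h' E'.c) x y)
            = mmul mPm (fun p u => mmul E'.c h' p u + mmul h' E'.c p u) := by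
          funext x y
          exact (mmul_add_right' mPm (mmul E'.c h') (mmul h' E'.c) x y).symm
        rw [e3, hh', mmul_idm_right mPm]
      funext w v
      rw [mmul_add_right' E.c (mh E x₀ y₀) Q w v, mmul_add_left' (mh E x₀ y₀) Q E.c w v]
      have key4 : mmul mPm mIm w v + idm E w v
          = mmul E.c (mh E x₀ y₀) w v + mmul (mh E x₀ y₀) E.c w v :=
        congrFun (congrFun (ident4 hxy hMxy hAxy) w) v
      have hs := hsum w v
      have solve : ∀ a b d e i p : F2, b + e = p → p + i = a + d → a + b + (d + e) = i := by
        decide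
      exact solve _ _ _ _ _ _ hs key4

end Aux
namespace Aux
open BasedComplex Polynomial

variable {C D : BasedComplex}

lemma pu_add_self (p : PU) : p + p = 0 := by
  ext k
  rw [Polynomial.coeff_add, F2_add_self, Polynomial.coeff_zero]

lemma pmod_add_self (f : C.PMod) : f + f = 0 := by
  funext x
  rw [Pi.add_apply, pu_add_self, Pi.zero_apply]

lemma pmod_eq_of_add_eq_zero {f g : C.PMod} (h : f + g = 0) : f = g := by
  calc f = f + (g + g) := by rw [pmod_add_self, add_zero]
  _ = (f + g) + g := by rw [add_assoc]
  _ = g := by rw [h, zero_add]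

section Cone

variable (φm : C.ι → D.ι → F2)
variable (hv : Valid C D 0 φm) (hf : Filt C D 0 φm)
variable (hcomm : mmul C.c φm = mmul φm D.c)

/-- the cone of a chain map -/
@[reducible]
noncomputable def cone : BasedComplex where
  ι := C.ι ⊕ D.ι
  M := Sum.elim (fun x => C.M x + 1) D.M
  A := Sum.elim C.A D.A
  c := Sum.elim (fun x => Sum.elim (C.c x) (φm x))
    (fun y => Sum.elim (fun _ => (0:F2)) (D.c y))
  hM := by
    intro e e' h
    match e, e' with
    | .inl x, .inl x' =>
      dsimp only [Sum.elim_inl, Sum.elim_inr] at h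
      obtain ⟨k, hk⟩ := C.hM x x' h
      exact ⟨k, by dsimp only [Sum.elim_inl]; omega⟩
    | .inl x, .inr y =>
      dsimp only [Sum.elim_inl, Sum.elim_inr] at h
      obtain ⟨k, hk⟩ := hv x y h
      exact ⟨k, by dsimp only [Sum.elim_inl, Sum.elim_inr]; omega⟩
    | .inr y, .inl x' => exact absurd rfl h
    | .inr y, .inr y' =>
      dsimp only [Sum.elim_inl, Sum.elim_inr] at h
      obtain ⟨k, hk⟩ := D.hM y y' h
      exact ⟨k, by dsimp only [Sum.elim_inr]; omega⟩
  hA := by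
    intro e e' h
    match e, e' with
    | .inl x, .inl x' =>
      dsimp only [Sum.elim_inl, Sum.elim_inr] at h
      have := C.hA x x' h
      dsimp only [Sum.elim_inl]
      omega
    | .inl x, .inr y =>
      dsimp only [Sum.elim_inl, Sum.elim_inr] at h
      have := hf x y h
      dsimp only [Sum.elim_inl, Sum.elim_inr]
      omega
    | .inr y, .inl x' => exact absurd rfl h
    | .inr y, .inr y' =>
      dsimp only [Sum.elim_inl, Sum.elim_inr] at h
      have := D.hA y y' h
      dsimp only [Sum.elim_inr]
      omega
  d2 := by
    intro e e''
    rw [Fintype.sum_sum_type]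
    match e, e'' with
    | .inl x, .inl x'' =>
      dsimp only [Sum.elim_inl, Sum.elim_inr]
      rw [C.d2 x x'']
      simp
    | .inl x, .inr y'' =>
      dsimp only [Sum.elim_inl, Sum.elim_inr]
      have h1 : (∑ x' : C.ι, C.c x x' * φm x' y'') = mmul C.c φm x y'' := rfl
      have h2 : (∑ y' : D.ι, φm x y' * D.c y' y'') = mmul φm D.c x y'' := rfl
      rw [h1, h2, hcomm, F2_add_self]
    | .inr y, .inl x'' =>
      dsimp only [Sum.elim_inl, Sum.elim_inr]
      simp
    | .inr y, .inr y'' =>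
      dsimp only [Sum.elim_inl, Sum.elim_inr]
      rw [D.d2 y y'']
      simp

variable {φm}

lemma cone_grt_inl_inl (x x' : C.ι) :
    grt (cone φm hv hf hcomm) (cone φm hv hf hcomm) (-1) (cone φm hv hf hcomm).c
        (.inl x) (.inl x') = grt C C (-1) C.c x x' := by
  rw [grt, grt]
  dsimp only [cone, Sum.elim_inl]
  all_goals refine if_congr ?_ rfl rfl
  all_goals omega

lemma cone_grt_inl_inr (x : C.ι) (y : D.ι) :
    grt (cone φm hv hf hcomm) (cone φm hv hf hcomm) (-1) (cone φm hv hf hcomm).c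
        (.inl x) (.inr y) = grt C D 0 φm x y := by
  rw [grt, grt]
  dsimp only [cone, Sum.elim_inl, Sum.elim_inr]
  all_goals refine if_congr ?_ rfl rfl
  all_goals omega

lemma cone_grt_inr_inr (y y' : D.ι) :
    grt (cone φm hv hf hcomm) (cone φm hv hf hcomm) (-1) (cone φm hv hf hcomm).c
        (.inr y) (.inr y') = grt D D (-1) D.c y y' := by
  rw [grt, grt]
  dsimp only [cone, Sum.elim_inr]
  all_goals refine if_congr ?_ rfl rfl
  all_goals omega

lemma cone_grt_inr_inl (y : D.ι) (x' : C.ι) :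
    grt (cone φm hv hf hcomm) (cone φm hv hf hcomm) (-1) (cone φm hv hf hcomm).c
        (.inr y) (.inl x') = 0 := by
  rw [grt]
  split_ifs <;> rfl

lemma cone_expo_inl_inl (x x' : C.ι) :
    expo (cone φm hv hf hcomm) (cone φm hv hf hcomm) (-1) (.inl x) (.inl x')
      = expo C C (-1) x x' := by
  unfold expo
  dsimp only [cone, Sum.elim_inl]
  all_goals omega

lemma cone_expo_inl_inr (x : C.ι) (y : D.ι) :
    expo (cone φm hv hf hcomm) (cone φm hv hf hcomm) (-1) (.inl x) (.inr y)
      = expo C D 0 x y := by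
  unfold expo
  dsimp only [cone, Sum.elim_inl, Sum.elim_inr]
  all_goals omega

lemma cone_expo_inr_inr (y y' : D.ι) :
    expo (cone φm hv hf hcomm) (cone φm hv hf hcomm) (-1) (.inr y) (.inr y')
      = expo D D (-1) y y' := by
  unfold expo
  dsimp only [cone, Sum.elim_inr]
  all_goals omega

lemma sum_coe_cone (g : C.ι ⊕ D.ι → PU) :
    (∑ e : (cone φm hv hf hcomm).ι, g e)
      = (∑ x : C.ι, g (.inl x)) + ∑ y : D.ι, g (.inr y) :=
  (rfl : (∑ e : (cone φm hv hf hcomm).ι, g e) = ∑ e : C.ι ⊕ D.ι, g e).trans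
    (Fintype.sum_sum_type _)

lemma cone_grDiff_inl (F : (cone φm hv hf hcomm).PMod) (x' : C.ι) :
    (cone φm hv hf hcomm).grDiff F (Sum.inl x') =
      C.grDiff (fun x => F (Sum.inl x)) x' := by
  rw [grDiff_eq]
  have hD : C.grDiff (fun x => F (Sum.inl x)) x'
      = ofMat C C (-1) (grt C C (-1) C.c) (fun x => F (Sum.inl x)) x' := by
    rw [grDiff_eq]
  rw [hD, ofMat_apply, ofMat_apply, sum_coe_cone hv hf hcomm]
  have h2 : (∑ y : D.ι, F (Sum.inr y) *
      (Polynomial.C (grt (cone φm hv hf hcomm) (cone φm hv hf hcomm) (-1)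
          (cone φm hv hf hcomm).c (.inr y) (.inl x')) *
        Polynomial.X ^ expo (cone φm hv hf hcomm) (cone φm hv hf hcomm) (-1)
          (.inr y) (.inl x'))) = 0 := by
    refine Finset.sum_eq_zero fun y _ => ?_
    rw [cone_grt_inr_inl]
    simp
  rw [h2, add_zero]
  refine Finset.sum_congr rfl fun x _ => ?_
  rw [cone_grt_inl_inl, cone_expo_inl_inl]

lemma cone_grDiff_inr (F : (cone φm hv hf hcomm).PMod) (y' : D.ι) :
    (cone φm hv hf hcomm).grDiff F (Sum.inr y') =
      ofMat C D 0 (grt C D 0 φm) (fun x => F (Sum.inl x)) y'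
        + D.grDiff (fun y => F (Sum.inr y)) y' := by
  rw [grDiff_eq]
  have hD : D.grDiff (fun y => F (Sum.inr y)) y'
      = ofMat D D (-1) (grt D D (-1) D.c) (fun y => F (Sum.inr y)) y' := by
    rw [grDiff_eq]
  rw [hD, ofMat_apply, ofMat_apply, ofMat_apply, sum_coe_cone hv hf hcomm]
  congr 1
  all_goals refine Finset.sum_congr rfl fun x _ => ?_
  all_goals simp only [cone_grt_inl_inr, cone_expo_inl_inr, cone_grt_inr_inr,
    cone_expo_inr_inr]
  exact congrArg (F (Sum.inl x) * ·)
    (congrArg (fun a => Polynomial.C a * Polynomial.X ^ expo C D 0 x y')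
      (cone_grt_inl_inr hv hf hcomm x y'))

variable (hcommgr : mmul (grt C C (-1) C.c) (grt C D 0 φm)
    = mmul (grt C D 0 φm) (grt D D (-1) D.c))

include hv hcommgr in
lemma grphi_comm (f : C.PMod) :
    D.grDiff (ofMat C D 0 (grt C D 0 φm) f)
      = ofMat C D 0 (grt C D 0 φm) (C.grDiff f) := by
  rw [grDiff_eq (C := D), ofMat_comp (grt_valid hv) (grt_valid (c_valid (C := D)))]
  rw [show ((0:ℤ) + -1) = ((-1:ℤ) + 0) from by norm_num, ← hcommgr]
  rw [← ofMat_comp (grt_valid (c_valid (C := C))) (grt_valid hv), ← grDiff_eq]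

include hv hcommgr in
lemma cone_acyclic
    (hq1 : ∀ g, D.grDiff g = 0 → ∃ f, C.grDiff f = 0 ∧
      ∃ h, g + ofMat C D 0 (grt C D 0 φm) f = D.grDiff h)
    (hq2 : ∀ f, C.grDiff f = 0 →
      (∃ h, D.grDiff h = ofMat C D 0 (grt C D 0 φm) f) → ∃ g, C.grDiff g = f) :
    ∀ F, (cone φm hv hf hcomm).grDiff F = 0 →
      ∃ G, (cone φm hv hf hcomm).grDiff G = F := by
  intro F hF
  have h1 : C.grDiff (fun x => F (Sum.inl x)) = 0 := by
    funext x'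
    have := congrFun hF (Sum.inl x')
    rw [cone_grDiff_inl] at this
    exact this
  have h2 : ofMat C D 0 (grt C D 0 φm) (fun x => F (Sum.inl x))
      + D.grDiff (fun y => F (Sum.inr y)) = 0 := by
    funext y'
    have := congrFun hF (Sum.inr y')
    rw [cone_grDiff_inr] at this
    exact this
  have h3 : ofMat C D 0 (grt C D 0 φm) (fun x => F (Sum.inl x))
      = D.grDiff (fun y => F (Sum.inr y)) := pmod_eq_of_add_eq_zero h2
  obtain ⟨f', hf'⟩ := hq2 _ h1 ⟨_, h3.symm⟩
  have hg1 : D.grDiff ((fun y => F (Sum.inr y)) + ofMat C D 0 (grt C D 0 φm) f') = 0 := by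
    rw [map_add, grphi_comm hv hcommgr, hf', ← h3, pmod_add_self]
  obtain ⟨fh, hfhker, gh, hgh⟩ := hq1 _ hg1
  refine ⟨fun e => Sum.elim (fun x => (f' + fh) x) (fun y => gh y) e, ?_⟩
  funext e
  match e with
  | .inl x' =>
    rw [cone_grDiff_inl]
    have : (fun x => Sum.elim (fun x => (f' + fh) x) (fun y => gh y) (Sum.inl x))
        = f' + fh := rfl
    rw [this, map_add, hf', hfhker, add_zero]
  | .inr y' =>
    rw [cone_grDiff_inr]
    have e1 : (fun x => Sum.elim (fun x => (f' + fh) x) (fun y => gh y) (Sum.inl x))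
        = f' + fh := rfl
    have e2 : (fun y => Sum.elim (fun x => (f' + fh) x) (fun y => gh y) (Sum.inr y))
        = gh := rfl
    rw [e1, e2]
    -- goal: (grφ (f' + fh) + D.grDiff gh) y' = F (inr y')
    have key : ∀ a b c : D.PMod, a + b + (c + a + b) = c := by
      intro a b c
      have h1 := pmod_add_self a
      have h2 := pmod_add_self b
      calc a + b + (c + a + b) = (a + a) + ((b + b) + c) := by abel
      _ = c := by rw [h1, h2, zero_add, zero_add]
    have hstep : ofMat C D 0 (grt C D 0 φm) (f' + fh) + D.grDiff gh
        = (fun y => F (Sum.inr y)) := by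
      rw [map_add, ← hgh]
      exact key _ _ _
    exact congrFun hstep y'

end Cone

end Aux
namespace Aux
open BasedComplex Polynomial

variable {C D : BasedComplex} (φm : C.ι → D.ι → F2)
variable (hv : Valid C D 0 φm) (hf : Filt C D 0 φm)
variable (hcomm : mmul C.c φm = mmul φm D.c)

lemma sum_coe_cone_F2 (g : C.ι ⊕ D.ι → F2) :
    (∑ e : (cone φm hv hf hcomm).ι, g e)
      = (∑ x : C.ι, g (.inl x)) + ∑ y : D.ι, g (.inr y) :=
  (rfl : (∑ e : (cone φm hv hf hcomm).ι, g e) = ∑ e : C.ι ⊕ D.ι, g e).trans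
    (Fintype.sum_sum_type _)

end Aux

open Aux BasedComplex Polynomial in
theorem filteredHtpyEquiv_of_grQuasiIso' (C D : BasedComplex)
    (φ : PChainMap C D) (hq : GrQuasiIso C D φ.toFun) :
    FilteredHtpyEquiv C D ∧
      ∃ ψ : PChainMap D C,
        PHomotopic C C (ψ.toFun.comp φ.toFun) LinearMap.id ∧
        PHomotopic D D (φ.toFun.comp ψ.toFun) LinearMap.id := by
  classical
  -- φ as a matrix
  have hg : ∀ g f, C.PHomog g f → D.PHomog (g + 0) (φ.toFun f) := by
    intro g f h
    rw [add_zero]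
    exact φ.graded g f h
  set φm : C.ι → D.ι → F2 := matOf 0 φ.toFun with hφm
  have hvφ : Valid C D 0 φm := matOf_valid hg
  have hfφ : Filt C D 0 φm := matOf_filt hg φ.filtered
  have hrepφ : ∀ f, φ.toFun f = ofMat C D 0 φm f := matOf_repr hg
  -- the chain map property at matrix level
  have hcomm : mmul C.c φm = mmul φm D.c := by
    apply ofMat_ext (deg := (-1 : ℤ))
    intro f
    have h1 : ofMat C D ((-1) + 0) (mmul C.c φm) f = φ.toFun (C.pDiff f) := by
      rw [← ofMat_comp c_valid hvφ, ← pDiff_eq, ← hrepφ]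
    have h2 : ofMat C D (0 + (-1)) (mmul φm D.c) f = D.pDiff (φ.toFun f) := by
      rw [← ofMat_comp hvφ c_valid, ← pDiff_eq, ← hrepφ]
    rw [show ((-1:ℤ) + 0) = (-1:ℤ) from by norm_num] at h1
    rw [show ((0:ℤ) + -1) = (-1:ℤ) from by norm_num] at h2
    rw [h1, h2, φ.comm f]
  have hcommgr : mmul (grt C C (-1) C.c) (grt C D 0 φm)
      = mmul (grt C D 0 φm) (grt D D (-1) D.c) := by
    have a1 := grt_mmul (c_valid (C := C)) (c_filt (C := C)) hvφ hfφ
    have a2 := grt_mmul hvφ hfφ (c_valid (C := D)) (c_filt (C := D))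
    rw [show ((-1:ℤ) + 0) = (-1:ℤ) from by norm_num] at a1
    rw [show ((0:ℤ) + -1) = (-1:ℤ) from by norm_num] at a2
    rw [hcomm] at a1
    exact a1.symm.trans a2
  -- gr quasi-isomorphism data, matrix form
  have hgrT : ∀ f, grTrunc C D φ.toFun f = ofMat C D 0 (grt C D 0 φm) f := grTrunc_eq hg
  have hq1 : ∀ g, D.grDiff g = 0 → ∃ f, C.grDiff f = 0 ∧
      ∃ h, g + ofMat C D 0 (grt C D 0 φm) f = D.grDiff h := by
    intro g hgk
    obtain ⟨f, hfk, hr⟩ := hq.1 g (LinearMap.mem_ker.mpr hgk)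
    obtain ⟨h, hh⟩ := LinearMap.mem_range.mp hr
    exact ⟨f, LinearMap.mem_ker.mp hfk, h, by rw [← hgrT]; exact hh.symm⟩
  have hq2 : ∀ f, C.grDiff f = 0 →
      (∃ h, D.grDiff h = ofMat C D 0 (grt C D 0 φm) f) → ∃ g, C.grDiff g = f := by
    rintro f hfk ⟨h, hh⟩
    have hmem : grTrunc C D φ.toFun f ∈ LinearMap.range D.grDiff :=
      LinearMap.mem_range.mpr ⟨h, by rw [hgrT]; exact hh⟩
    obtain ⟨g, hg'⟩ := LinearMap.mem_range.mp (hq.2 f (LinearMap.mem_ker.mpr hfk) hmem)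
    exact ⟨g, hg'⟩
  -- the cone and its contraction
  set Ec := cone φm hvφ hfφ hcomm with hEc
  have hacycE : ∀ F, Ec.grDiff F = 0 → ∃ G, Ec.grDiff G = F :=
    cone_acyclic hvφ hfφ hcomm hcommgr hq1 hq2
  obtain ⟨h, hvh, hfh, hident⟩ := contraction (Fintype.card Ec.ι) Ec rfl hacycE
  -- blocks
  set ψm : D.ι → C.ι → F2 := fun y x => h (Sum.inr y) (Sum.inl x) with hψm
  set HC : C.ι → C.ι → F2 := fun x x' => h (Sum.inl x) (Sum.inl x') with hHC
  set HD : D.ι → D.ι → F2 := fun y y' => h (Sum.inr y) (Sum.inr y') with hHD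
  have eMl : ∀ x : C.ι, Ec.M (Sum.inl x) = C.M x + 1 := fun _ => rfl
  have eMr : ∀ y : D.ι, Ec.M (Sum.inr y) = D.M y := fun _ => rfl
  have eAl : ∀ x : C.ι, Ec.A (Sum.inl x) = C.A x := fun _ => rfl
  have eAr : ∀ y : D.ι, Ec.A (Sum.inr y) = D.A y := fun _ => rfl
  have hvψ : Valid D C 0 ψm := by
    intro y x hne
    obtain ⟨k, hk⟩ := hvh (Sum.inr y) (Sum.inl x) hne
    rw [eMl x, eMr y] at hk
    exact ⟨k, by omega⟩
  have hfψ : Filt D C 0 ψm := by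
    intro y x hne
    have hk := hfh (Sum.inr y) (Sum.inl x) hne
    rw [eMl x, eMr y, eAl x, eAr y] at hk
    omega
  have hvHC : Valid C C 1 HC := by
    intro x x' hne
    obtain ⟨k, hk⟩ := hvh (Sum.inl x) (Sum.inl x') hne
    rw [eMl x, eMl x'] at hk
    exact ⟨k, by omega⟩
  have hfHC : Filt C C 1 HC := by
    intro x x' hne
    have hk := hfh (Sum.inl x) (Sum.inl x') hne
    rw [eMl x, eMl x', eAl x, eAl x'] at hk
    omega
  have hvHD : Valid D D 1 HD := by
    intro y y' hne
    obtain ⟨k, hk⟩ := hvh (Sum.inr y) (Sum.inr y') hne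
    rw [eMr y, eMr y'] at hk
    exact ⟨k, by omega⟩
  have hfHD : Filt D D 1 HD := by
    intro y y' hne
    have hk := hfh (Sum.inr y) (Sum.inr y') hne
    rw [eMr y, eMr y', eAr y, eAr y'] at hk
    omega
  -- block identities
  have hbXX : ∀ x x', mmul Ec.c h (.inl x) (.inl x')
      = mmul C.c HC x x' + mmul φm ψm x x' := by
    intro x x'
    have h0 : mmul Ec.c h (.inl x) (.inl x')
        = ∑ e : Ec.ι, Ec.c (.inl x) e * h e (.inl x') := rfl
    rw [h0, sum_coe_cone_F2]
    rfl
  have hbXX' : ∀ x x', mmul h Ec.c (.inl x) (.inl x') = mmul HC C.c x x' := by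
    intro x x'
    have h0 : mmul h Ec.c (.inl x) (.inl x')
        = ∑ e : Ec.ι, h (.inl x) e * Ec.c e (.inl x') := rfl
    rw [h0, sum_coe_cone_F2]
    have h1 : (∑ y : D.ι, h (.inl x) (.inr y) * Ec.c (.inr y) (.inl x')) = 0 := by
      refine Finset.sum_eq_zero fun y _ => ?_
      have : Ec.c (.inr y) (.inl x') = 0 := rfl
      rw [this, mul_zero]
    rw [h1, add_zero]
    rfl
  have hbYX : ∀ y x', mmul Ec.c h (.inr y) (.inl x') = mmul D.c ψm y x' := by
    intro y x'
    have h0 : mmul Ec.c h (.inr y) (.inl x')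
        = ∑ e : Ec.ι, Ec.c (.inr y) e * h e (.inl x') := rfl
    rw [h0, sum_coe_cone_F2]
    have h1 : (∑ x : C.ι, Ec.c (.inr y) (.inl x) * h (.inl x) (.inl x')) = 0 := by
      refine Finset.sum_eq_zero fun x _ => ?_
      have : Ec.c (.inr y) (.inl x) = 0 := rfl
      rw [this, zero_mul]
    rw [h1, zero_add]
    rfl
  have hbYX' : ∀ y x', mmul h Ec.c (.inr y) (.inl x') = mmul ψm C.c y x' := by
    intro y x'
    have h0 : mmul h Ec.c (.inr y) (.inl x')
        = ∑ e : Ec.ι, h (.inr y) e * Ec.c e (.inl x') := rfl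
    rw [h0, sum_coe_cone_F2]
    have h1 : (∑ y' : D.ι, h (.inr y) (.inr y') * Ec.c (.inr y') (.inl x')) = 0 := by
      refine Finset.sum_eq_zero fun y' _ => ?_
      have : Ec.c (.inr y') (.inl x') = 0 := rfl
      rw [this, mul_zero]
    rw [h1, add_zero]
    rfl
  have hbYY : ∀ y y', mmul Ec.c h (.inr y) (.inr y') = mmul D.c HD y y' := by
    intro y y'
    have h0 : mmul Ec.c h (.inr y) (.inr y')
        = ∑ e : Ec.ι, Ec.c (.inr y) e * h e (.inr y') := rfl
    rw [h0, sum_coe_cone_F2]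
    have h1 : (∑ x : C.ι, Ec.c (.inr y) (.inl x) * h (.inl x) (.inr y')) = 0 := by
      refine Finset.sum_eq_zero fun x _ => ?_
      have : Ec.c (.inr y) (.inl x) = 0 := rfl
      rw [this, zero_mul]
    rw [h1, zero_add]
    rfl
  have hbYY' : ∀ y y', mmul h Ec.c (.inr y) (.inr y')
      = mmul ψm φm y y' + mmul HD D.c y y' := by
    intro y y'
    have h0 : mmul h Ec.c (.inr y) (.inr y')
        = ∑ e : Ec.ι, h (.inr y) e * Ec.c e (.inr y') := rfl
    rw [h0, sum_coe_cone_F2]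
    rfl
  have hidXX : ∀ x x', idm Ec (Sum.inl x) (Sum.inl x') = idm C x x' := by
    intro x x'
    rw [idm, idm]
    by_cases hxx : x = x'
    · subst hxx
      rw [if_pos rfl, if_pos rfl]
    · rw [if_neg (fun hcon => hxx (Sum.inl.inj hcon)), if_neg hxx]
  have hidYX : ∀ y x', idm Ec (Sum.inr y) (Sum.inl x') = 0 := by
    intro y x'
    rw [idm]
    exact if_neg (by simp)
  have hidYY : ∀ y y', idm Ec (Sum.inr y) (Sum.inr y') = idm D y y' := by
    intro y y'
    rw [idm, idm]
    by_cases hyy : y = y'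
    · subst hyy
      rw [if_pos rfl, if_pos rfl]
    · rw [if_neg (fun hcon => hyy (Sum.inr.inj hcon)), if_neg hyy]
  -- the three homotopy equations, matrix level
  have eqC : ∀ x x', mmul HC C.c x x' + mmul C.c HC x x'
      = idm C x x' + mmul φm ψm x x' := by
    intro x x'
    have hi : mmul Ec.c h (.inl x) (.inl x') + mmul h Ec.c (.inl x) (.inl x')
        = idm Ec (.inl x) (.inl x') := congrFun (congrFun hident _) _
    rw [hbXX x x', hbXX' x x', hidXX x x'] at hi
    have solve : ∀ a b c i : F2, a + b + c = i → c + a = i + b := by decide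
    exact solve _ _ _ _ hi
  have eqψ : mmul D.c ψm = mmul ψm C.c := by
    funext y x'
    have hi : mmul Ec.c h (.inr y) (.inl x') + mmul h Ec.c (.inr y) (.inl x')
        = idm Ec (.inr y) (.inl x') := congrFun (congrFun hident _) _
    rw [hbYX y x', hbYX' y x', hidYX y x'] at hi
    exact F2_eq_of_add_eq_zero hi
  have eqD : ∀ y y', mmul HD D.c y y' + mmul D.c HD y y'
      = idm D y y' + mmul ψm φm y y' := by
    intro y y'
    have hi : mmul Ec.c h (.inr y) (.inr y') + mmul h Ec.c (.inr y) (.inr y')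
        = idm Ec (.inr y) (.inr y') := congrFun (congrFun hident _) _
    rw [hbYY y y', hbYY' y y', hidYY y y'] at hi
    have solve : ∀ a b c i : F2, a + (b + c) = i → c + a = i + b := by decide
    exact solve _ _ _ _ hi
  -- the chain map ψ
  have hψcomm : ∀ f, ofMat D C 0 ψm (D.pDiff f) = C.pDiff (ofMat D C 0 ψm f) := by
    intro f
    rw [pDiff_eq f, ofMat_comp (c_valid (C := D)) hvψ,
      pDiff_eq (ofMat D C 0 ψm f), ofMat_comp hvψ (c_valid (C := C))]
    rw [show ((-1:ℤ) + 0) = ((0:ℤ) + -1) from by norm_num, eqψ]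
  set ψc : PChainMap D C :=
    { toFun := ofMat D C 0 ψm
      comm := hψcomm
      graded := by
        intro m f hf
        have := ofMat_graded hvψ m f hf
        rwa [add_zero] at this
      filtered := ofMat_filtered hvψ hfψ } with hψc
  -- homotopy 1 : ψ ∘ φ ≃ id on C
  have hom1 : PHomotopic C C (ψc.toFun.comp φ.toFun) LinearMap.id := by
    refine ⟨ofMat C C 1 HC, ofMat_filtered hvHC hfHC, ofMat_graded hvHC, ?_⟩
    intro f
    show C.pDiff (ofMat C C 1 HC f) + ofMat C C 1 HC (C.pDiff f)
      = ψc.toFun (φ.toFun f) + f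
    rw [pDiff_eq (ofMat C C 1 HC f), ofMat_comp hvHC (c_valid (C := C)),
      pDiff_eq f, ofMat_comp (c_valid (C := C)) hvHC]
    rw [show ((1:ℤ) + -1) = (0:ℤ) from by norm_num,
      show ((-1:ℤ) + 1) = (0:ℤ) from by norm_num]
    rw [← ofMat_add 0 (mmul HC C.c) (mmul C.c HC) f]
    rw [show (fun x x' => mmul HC C.c x x' + mmul C.c HC x x')
        = (fun x x' => idm C x x' + mmul φm ψm x x') from
      funext fun x => funext fun x' => eqC x x']
    rw [ofMat_add 0 (idm C) (mmul φm ψm) f, ofMat_idm]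
    have : ψc.toFun (φ.toFun f) = ofMat C C (0 + 0) (mmul φm ψm) f := by
      rw [hrepφ f]
      show ofMat D C 0 ψm (ofMat C D 0 φm f) = _
      rw [ofMat_comp hvφ hvψ]
    rw [this, show ((0:ℤ) + 0) = (0:ℤ) from by norm_num, add_comm]
  -- homotopy 2 : φ ∘ ψ ≃ id on D
  have hom2 : PHomotopic D D (φ.toFun.comp ψc.toFun) LinearMap.id := by
    refine ⟨ofMat D D 1 HD, ofMat_filtered hvHD hfHD, ofMat_graded hvHD, ?_⟩
    intro f
    show D.pDiff (ofMat D D 1 HD f) + ofMat D D 1 HD (D.pDiff f)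
      = φ.toFun (ψc.toFun f) + f
    rw [pDiff_eq (ofMat D D 1 HD f), ofMat_comp hvHD (c_valid (C := D)),
      pDiff_eq f, ofMat_comp (c_valid (C := D)) hvHD]
    rw [show ((1:ℤ) + -1) = (0:ℤ) from by norm_num,
      show ((-1:ℤ) + 1) = (0:ℤ) from by norm_num]
    rw [← ofMat_add 0 (mmul HD D.c) (mmul D.c HD) f]
    rw [show (fun y y' => mmul HD D.c y y' + mmul D.c HD y y')
        = (fun y y' => idm D y y' + mmul ψm φm y y') from
      funext fun y => funext fun y' => eqD y y']
    rw [ofMat_add 0 (idm D) (mmul ψm φm) f, ofMat_idm]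
    have : φ.toFun (ψc.toFun f) = ofMat D D (0 + 0) (mmul ψm φm) f := by
      show φ.toFun (ofMat D C 0 ψm f) = _
      rw [hrepφ (ofMat D C 0 ψm f), ofMat_comp hvψ hvφ]
    rw [this, show ((0:ℤ) + 0) = (0:ℤ) from by norm_num, add_comm]
  exact ⟨⟨φ, ψc, hom1, hom2⟩, ψc, hom1, hom2⟩

/-- If two `ℤ`-graded, `ℤ`-filtered chain complexes over `𝔽₂[U]` (free, finitely
generated, filtration bounded below) are filtered quasi-isomorphic, then they are
filtered chain homotopy equivalent; in particular a filtered quasi-isomorphism `φ`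
between them is itself a filtered chain homotopy equivalence. -/
theorem filteredHtpyEquiv_of_grQuasiIso (C D : BasedComplex)
    (φ : PChainMap C D) (hq : GrQuasiIso C D φ.toFun) :
    FilteredHtpyEquiv C D ∧
      ∃ ψ : PChainMap D C,
        PHomotopic C C (ψ.toFun.comp φ.toFun) LinearMap.id ∧
        PHomotopic D D (φ.toFun.comp ψ.toFun) LinearMap.id :=
  filteredHtpyEquiv_of_grQuasiIso' C D φ hq
end
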